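/- arXiv:2603.29824 — 7 statements merged into one kernel-verified Lean document; each statement's English description precedes it below -/
import Mathlib

section
/- Let J be an n×p real matrix with a compact singular value decomposition J = U D Vᵀ, where U ∈ ℝ^{n×k} and V ∈ ℝ^{p×k} have orthonormal columns and D ∈ ℝ^{k×k} is diagonal with strictly positive diagonal entries (k = rank J). Let H be any p×q real matrix and set J_r = JH and P = D Vᵀ H. Then JJ† − J_r J_r† = U (I_k − P P†) Uᵀ. -/
open Matrix

/-- The four Penrose conditions: `Ap` is the Moore–Penrose pseudoinverse of `A`. -/
def IsMPInv {m n : Type*} [Fintype m] [Fintype n]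
    (A : Matrix m n ℝ) (Ap : Matrix n m ℝ) : Prop :=
  A * Ap * A = A ∧ Ap * A * Ap = Ap ∧ (A * Ap)ᵀ = A * Ap ∧ (Ap * A)ᵀ = Ap * A

lemma mp_unique {m n : Type*} [Fintype m] [Fintype n]
    {A : Matrix m n ℝ} {B C : Matrix n m ℝ}
    (hB : IsMPInv A B) (hC : IsMPInv A C) : B = C := by
  obtain ⟨hB1, hB2, hB3, hB4⟩ := hB
  obtain ⟨hC1, hC2, hC3, hC4⟩ := hC
  have hAB : A * B = A * C := by
    have h : A * B * (A * C) = A * C := by rw [← Matrix.mul_assoc, hB1]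
    calc A * B = A * C * A * B := by rw [hC1]
      _ = A * C * (A * B) := by rw [Matrix.mul_assoc]
      _ = (A * C)ᵀ * (A * B)ᵀ := by rw [hC3, hB3]
      _ = (A * B * (A * C))ᵀ := by rw [← Matrix.transpose_mul]
      _ = (A * C)ᵀ := by rw [h]
      _ = A * C := hC3
  have hBA : B * A = C * A := by
    have h : C * A * (B * A) = C * A := by
      rw [Matrix.mul_assoc C A, ← Matrix.mul_assoc A B A, hB1]
    calc B * A = B * (A * C * A) := by rw [hC1]
      _ = B * A * (C * A) := by simp only [Matrix.mul_assoc]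
      _ = (B * A)ᵀ * (C * A)ᵀ := by rw [hB4, hC4]
      _ = (C * A * (B * A))ᵀ := by rw [← Matrix.transpose_mul]
      _ = (C * A)ᵀ := by rw [h]
      _ = C * A := hC4
  calc B = B * A * B := hB2.symm
    _ = C * A * B := by rw [hBA]
    _ = C * (A * B) := by rw [Matrix.mul_assoc]
    _ = C * (A * C) := by rw [hAB]
    _ = C * A * C := by rw [Matrix.mul_assoc]
    _ = C := hC2

/-- If `J = U D Vᵀ` is a compact SVD of `J` and `J_r = JH`, `P = D Vᵀ H`, then
`JJ† − J_r J_r† = U (I − P P†) Uᵀ`. -/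
theorem projection_difference_compact_svd {n p q k : ℕ}
    (J : Matrix (Fin n) (Fin p) ℝ)
    (U : Matrix (Fin n) (Fin k) ℝ) (V : Matrix (Fin p) (Fin k) ℝ)
    (d : Fin k → ℝ)
    (hU : Uᵀ * U = 1) (hV : Vᵀ * V = 1) (hd : ∀ i, 0 < d i)
    (hJ : J = U * diagonal d * Vᵀ)
    (H : Matrix (Fin p) (Fin q) ℝ)
    (Jr : Matrix (Fin n) (Fin q) ℝ) (hJr : Jr = J * H)
    (P : Matrix (Fin k) (Fin q) ℝ) (hP : P = diagonal d * Vᵀ * H)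
    (Jp : Matrix (Fin p) (Fin n) ℝ) (hJp : IsMPInv J Jp)
    (Jrp : Matrix (Fin q) (Fin n) ℝ) (hJrp : IsMPInv Jr Jrp)
    (Pp : Matrix (Fin q) (Fin k) ℝ) (hPp : IsMPInv P Pp) :
    J * Jp - Jr * Jrp = U * (1 - P * Pp) * Uᵀ := by
  set D : Matrix (Fin k) (Fin k) ℝ := diagonal d with hD
  set Di : Matrix (Fin k) (Fin k) ℝ := diagonal (fun i => (d i)⁻¹) with hDi
  have hDDi : D * Di = 1 := by
    rw [hD, hDi, diagonal_mul_diagonal, ← diagonal_one]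
    exact congrArg diagonal (funext fun i => mul_inv_cancel₀ (hd i).ne')
  have hDiD : Di * D = 1 := by
    rw [hD, hDi, diagonal_mul_diagonal, ← diagonal_one]
    exact congrArg diagonal (funext fun i => inv_mul_cancel₀ (hd i).ne')
  have hVV : ∀ {m : Type} (X : Matrix (Fin k) m ℝ), Vᵀ * (V * X) = X := by
    intro m X; rw [← Matrix.mul_assoc, hV, Matrix.one_mul]
  have hUU : ∀ {m : Type} (X : Matrix (Fin k) m ℝ), Uᵀ * (U * X) = X := by
    intro m X; rw [← Matrix.mul_assoc, hU, Matrix.one_mul]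
  have hDdi : ∀ {m : Type} (X : Matrix (Fin k) m ℝ), D * (Di * X) = X := by
    intro m X; rw [← Matrix.mul_assoc, hDDi, Matrix.one_mul]
  have hDiDx : ∀ {m : Type} (X : Matrix (Fin k) m ℝ), Di * (D * X) = X := by
    intro m X; rw [← Matrix.mul_assoc, hDiD, Matrix.one_mul]
  -- J's pseudoinverse candidate
  have hJJp : J * (V * Di * Uᵀ) = U * Uᵀ := by
    rw [hJ]; simp only [Matrix.mul_assoc]; rw [hVV, hDdi]
  have hJpJ : (V * Di * Uᵀ) * J = V * Vᵀ := by
    rw [hJ]; simp only [Matrix.mul_assoc]; rw [hUU, hDiDx]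
  have hJcand : IsMPInv J (V * Di * Uᵀ) := by
    refine ⟨?_, ?_, ?_, ?_⟩
    · rw [hJ]; simp only [Matrix.mul_assoc]; rw [hUU, hDiDx, hVV]
    · rw [hJ]; simp only [Matrix.mul_assoc]; rw [hVV, hDdi, hUU]
    · rw [hJJp]; simp [Matrix.transpose_mul]
    · rw [hJpJ]; simp [Matrix.transpose_mul]
  have hJpEq : Jp = V * Di * Uᵀ := mp_unique hJp hJcand
  have hJJpEq : J * Jp = U * Uᵀ := by rw [hJpEq]; exact hJJp
  -- Jr = U * P and its pseudoinverse candidate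
  have hJrUP : Jr = U * P := by
    rw [hJr, hJ, hP]; simp only [Matrix.mul_assoc]
  obtain ⟨hP1, hP2, hP3, hP4⟩ := hPp
  have hP1' : P * (Pp * P) = P := by rw [← Matrix.mul_assoc, hP1]
  have e2 : Pp * Uᵀ * Jr = Pp * P := by
    rw [hJrUP, Matrix.mul_assoc, hUU]
  have e3 : Jr * (Pp * Uᵀ) = U * (P * Pp) * Uᵀ := by
    rw [hJrUP]; simp only [Matrix.mul_assoc]
  have hJrcand : IsMPInv Jr (Pp * Uᵀ) := by
    refine ⟨?_, ?_, ?_, ?_⟩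
    · rw [Matrix.mul_assoc, e2, hJrUP, Matrix.mul_assoc, hP1']
    · rw [e2, ← Matrix.mul_assoc, hP2]
    · rw [e3]; simp only [Matrix.transpose_mul, Matrix.transpose_transpose, hP3]
      simp only [Matrix.mul_assoc]
    · rw [e2]; exact hP4
  have hJrpEq : Jrp = Pp * Uᵀ := mp_unique hJrp hJrcand
  have hJrJrpEq : Jr * Jrp = U * (P * Pp) * Uᵀ := by rw [hJrpEq]; exact e3
  rw [hJJpEq, hJrJrpEq, Matrix.mul_sub, Matrix.mul_one, Matrix.sub_mul]
end

section
/- Let M ∈ ℝ^{a×m} have full row rank a, N ∈ ℝ^{b×n} have full row rank b, and let A ∈ ℝ^{m×k}, B ∈ ℝ^{n×l} be arbitrary. Form the block matrix P = [ M ⊗ NB | MA ⊗ N ] ∈ ℝ^{ab×(ml+kb)} (⊗ the Kronecker product). Then the column space of P equals (ℝ^a ⊗ col(NB)) + (col(MA) ⊗ ℝ^b), and consequently I_{ab} − P P† = (I_a − Π_{MA}) ⊗ (I_b − Π_{NB}), where Π_X = XX† denotes the orthogonal projection onto the column space of X. -/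
open Matrix
open scoped Kronecker

/-- The tensor product of subspaces `F ⊆ ℝ^a` and `G ⊆ ℝ^b` inside `ℝ^{ab}`
(vectors indexed by pairs), spanned by the elementary tensors `f ⊗ g`. -/
def tensorSub {a b : ℕ} (F : Submodule ℝ (Fin a → ℝ)) (G : Submodule ℝ (Fin b → ℝ)) :
    Submodule ℝ (Fin a × Fin b → ℝ) :=
  Submodule.span ℝ {x | ∃ f ∈ F, ∃ g ∈ G, x = fun p => f p.1 * g p.2}

/- Auxiliary lemmas -/

lemma range_top_of_rank {a m : ℕ} (M : Matrix (Fin a) (Fin m) ℝ) (hM : M.rank = a) :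
    LinearMap.range M.mulVecLin = ⊤ := by
  apply Submodule.eq_top_of_finrank_eq
  rw [← Matrix.rank, hM, Module.finrank_fin_fun]

lemma exists_right_inv {a m : ℕ} (M : Matrix (Fin a) (Fin m) ℝ) (hM : M.rank = a) :
    ∃ Mr : Matrix (Fin m) (Fin a) ℝ, M * Mr = 1 := by
  have h := range_top_of_rank M hM
  have hs : Function.Surjective M.mulVecLin := by
    rw [← LinearMap.range_eq_top]; exact h
  choose v hv using fun j => hs (Pi.single j 1)
  refine ⟨Matrix.of (fun p j => v j p), ?_⟩
  ext i j
  have := congrFun (hv j) i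
  simp only [Matrix.mulVecLin_apply] at this
  simpa [Matrix.mul_apply, Matrix.mulVec, dotProduct, Matrix.one_apply, Pi.single_apply] using this

lemma range_kron {a b m n : ℕ} (X : Matrix (Fin a) (Fin m) ℝ) (Y : Matrix (Fin b) (Fin n) ℝ) :
    LinearMap.range (X ⊗ₖ Y).mulVecLin
      = tensorSub (LinearMap.range X.mulVecLin) (LinearMap.range Y.mulVecLin) := by
  apply le_antisymm
  · rintro _ ⟨v, rfl⟩
    have : (X ⊗ₖ Y).mulVecLin v
        = ∑ q : Fin m × Fin n, v q • (fun p : Fin a × Fin b => X p.1 q.1 * Y p.2 q.2) := by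
      ext p
      simp only [Matrix.mulVecLin_apply, Matrix.mulVec, dotProduct, Matrix.kroneckerMap_apply,
        Finset.sum_apply, Pi.smul_apply, smul_eq_mul]
      exact Finset.sum_congr rfl fun q _ => by ring
    rw [this]
    refine Submodule.sum_mem _ fun q _ => Submodule.smul_mem _ _ (Submodule.subset_span ?_)
    exact ⟨fun i => X i q.1, ⟨Pi.single q.1 1, by ext i; simp [Matrix.mulVecLin_apply]⟩,
      fun j => Y j q.2, ⟨Pi.single q.2 1, by ext j; simp [Matrix.mulVecLin_apply]⟩, rfl⟩
  · rw [tensorSub, Submodule.span_le]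
    rintro _ ⟨f, ⟨u, rfl⟩, g, ⟨w, rfl⟩, rfl⟩
    refine ⟨fun q => u q.1 * w q.2, ?_⟩
    ext p
    simp only [Matrix.mulVecLin_apply, Matrix.mulVec, dotProduct, Matrix.kroneckerMap_apply]
    rw [Finset.sum_mul_sum, ← Finset.sum_product']
    refine Finset.sum_congr rfl fun q _ => by ring

lemma range_fromColumns_eq {ρ ι κ : Type*} [Fintype ρ] [Fintype ι] [Fintype κ]
    (A : Matrix ρ ι ℝ) (B : Matrix ρ κ ℝ) :
    LinearMap.range (fromCols A B).mulVecLin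
      = LinearMap.range A.mulVecLin ⊔ LinearMap.range B.mulVecLin := by
  apply le_antisymm
  · rintro _ ⟨v, rfl⟩
    rw [Matrix.mulVecLin_apply, ← Sum.elim_comp_inl_inr v, fromCols_mulVec_sumElim]
    exact Submodule.add_mem_sup ⟨_, rfl⟩ ⟨_, rfl⟩
  · rw [sup_le_iff]
    constructor <;> rintro _ ⟨v, rfl⟩
    · exact ⟨Sum.elim v 0, by simp [Matrix.mulVecLin_apply]⟩
    · exact ⟨Sum.elim 0 v, by simp [Matrix.mulVecLin_apply]⟩

lemma sub_kron {a b m n : ℕ} (X X' : Matrix (Fin a) (Fin m) ℝ) (Y : Matrix (Fin b) (Fin n) ℝ) :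
    (X - X') ⊗ₖ Y = X ⊗ₖ Y - X' ⊗ₖ Y := by
  ext ⟨i, j⟩ ⟨p, s⟩; simp [sub_mul]

lemma kron_sub {a b m n : ℕ} (X : Matrix (Fin a) (Fin m) ℝ) (Y Y' : Matrix (Fin b) (Fin n) ℝ) :
    X ⊗ₖ (Y - Y') = X ⊗ₖ Y - X ⊗ₖ Y' := by
  ext ⟨i, j⟩ ⟨p, s⟩; simp [mul_sub]

lemma kron_transpose {a b m n : ℕ} (X : Matrix (Fin a) (Fin m) ℝ) (Y : Matrix (Fin b) (Fin n) ℝ) :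
    (X ⊗ₖ Y)ᵀ = Xᵀ ⊗ₖ Yᵀ := (kroneckerMap_transpose _ _ _).symm

/-- For `M` of full row rank `a`, `N` of full row rank `b`, and the block matrix
`P = [ M ⊗ NB | MA ⊗ N ]`, the column space of `P` is `(ℝ^a ⊗ col(NB)) + (col(MA) ⊗ ℝ^b)`,
and `I − PP† = (I − Π_{MA}) ⊗ (I − Π_{NB})`. -/
theorem lora_tangent_space_kronecker {a b m n k l : ℕ}
    (M : Matrix (Fin a) (Fin m) ℝ) (N : Matrix (Fin b) (Fin n) ℝ)
    (hM : M.rank = a) (hN : N.rank = b)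
    (A : Matrix (Fin m) (Fin k) ℝ) (B : Matrix (Fin n) (Fin l) ℝ)
    (P : Matrix (Fin a × Fin b) ((Fin m × Fin l) ⊕ (Fin k × Fin n)) ℝ)
    (hP : P = fromCols (M ⊗ₖ (N * B)) ((M * A) ⊗ₖ N))
    (Pp : Matrix ((Fin m × Fin l) ⊕ (Fin k × Fin n)) (Fin a × Fin b) ℝ)
    (hPp : IsMPInv P Pp)
    (MAp : Matrix (Fin k) (Fin a) ℝ) (hMAp : IsMPInv (M * A) MAp)
    (NBp : Matrix (Fin l) (Fin b) ℝ) (hNBp : IsMPInv (N * B) NBp) :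
    LinearMap.range P.mulVecLin
      = tensorSub ⊤ (LinearMap.range (N * B).mulVecLin)
        ⊔ tensorSub (LinearMap.range (M * A).mulVecLin) ⊤ ∧
    (1 : Matrix (Fin a × Fin b) (Fin a × Fin b) ℝ) - P * Pp
      = (1 - (M * A) * MAp) ⊗ₖ (1 - (N * B) * NBp) := by
  obtain ⟨Mr, hMr⟩ := exists_right_inv M hM
  obtain ⟨Nr, hNr⟩ := exists_right_inv N hN
  constructor
  · rw [hP, range_fromColumns_eq, range_kron, range_kron,
      range_top_of_rank M hM, range_top_of_rank N hN]
  · obtain ⟨h1, -, h3, -⟩ := hPp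
    obtain ⟨hA1, -, hA3, -⟩ := hMAp
    obtain ⟨hB1, -, hB3, -⟩ := hNBp
    set S := (M * A) * MAp with hS
    set T := (N * B) * NBp with hT
    set Q := (1 - S) ⊗ₖ (1 - T) with hQ
    set E := P * Pp with hE
    set F := (1 : Matrix (Fin a × Fin b) (Fin a × Fin b) ℝ) - Q with hF
    have hQP : Q * P = 0 := by
      rw [hP, hQ, Matrix.mul_fromCols, ← mul_kronecker_mul, ← mul_kronecker_mul]
      have e1 : (1 - T) * (N * B) = 0 := by
        rw [Matrix.sub_mul, Matrix.one_mul, hB1, sub_self]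
      have e2 : (1 - S) * (M * A) = 0 := by
        rw [Matrix.sub_mul, Matrix.one_mul, hA1, sub_self]
      rw [e1, e2, Matrix.kronecker_zero, Matrix.zero_kronecker]
      ext (i) (j | j) <;> simp [Matrix.fromCols]
    have hPW : P * Matrix.fromRows ((Mr * (1 - S)) ⊗ₖ NBp) (MAp ⊗ₖ Nr) = F := by
      rw [hP, Matrix.fromCols_mul_fromRows, ← mul_kronecker_mul, ← mul_kronecker_mul,
        ← Matrix.mul_assoc M Mr (1 - S), hMr, Matrix.one_mul, hNr, ← hS, ← hT]
      rw [hF, hQ]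
      simp only [sub_kron, kron_sub, Matrix.one_kronecker_one]
      abel
    have hFE : F * E = E := by
      rw [hF, hE, Matrix.sub_mul, Matrix.one_mul, ← Matrix.mul_assoc, hQP, Matrix.zero_mul,
        sub_zero]
    have hEF : E * F = F := by
      rw [← hPW, hE, ← Matrix.mul_assoc, h1]
    have hFsym : Fᵀ = F := by
      rw [hF, Matrix.transpose_sub, Matrix.transpose_one, hQ, kron_transpose,
        Matrix.transpose_sub, Matrix.transpose_sub, Matrix.transpose_one, Matrix.transpose_one,
        hA3, hB3]
    have hEeqF : E = F := by
      conv_lhs => rw [← hFE]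
      calc F * E = (F * E)ᵀᵀ := by rw [Matrix.transpose_transpose]
      _ = (Eᵀ * Fᵀ)ᵀ := by rw [Matrix.transpose_mul]
      _ = (E * F)ᵀ := by rw [h3, hFsym]
      _ = F := by rw [hEF, hFsym]
    rw [hEeqF, hF, sub_sub_cancel]
end

section
/- Let J ∈ ℝ^{n×(d_in·d_out)} satisfy JᵀJ = S ⊗ T, where S ∈ ℝ^{d_in×d_in} and T ∈ ℝ^{d_out×d_out} are positive semidefinite with thin spectral decompositions S = U_S D_S U_Sᵀ and T = U_T D_T U_Tᵀ (U_S ∈ ℝ^{d_in×r_s}, U_T ∈ ℝ^{d_out×r_t} with orthonormal columns, D_S, D_T diagonal positive definite, r_s = rank S, r_t = rank T). Let A₀ ∈ ℝ^{r×d_in}, B₀ ∈ ℝ^{d_out×r}, and H = [ I_{d_in} ⊗ B₀ | A₀ᵀ ⊗ I_{d_out} ]. Then there exists U ∈ ℝ^{n×(r_s r_t)} with orthonormal columns such that J = U (D_S^{1/2} ⊗ D_T^{1/2}) (U_S ⊗ U_T)ᵀ is a thin SVD of J, and JJ† − (JH)(JH)† = U [ (I_{r_s} − Π_{D_S^{1/2}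 U_Sᵀ A₀ᵀ}) ⊗ (I_{r_t} − Π_{D_T^{1/2} U_Tᵀ B₀}) ] Uᵀ. -/
open Matrix
open scoped Kronecker

private lemma kron_transpose_s5 {l m p q : Type*} (A : Matrix l m ℝ) (B : Matrix p q ℝ) :
    (A ⊗ₖ B)ᵀ = Aᵀ ⊗ₖ Bᵀ := (Matrix.kroneckerMap_transpose _ _ _).symm

private lemma sub_kron_s5 {l m p q : Type*} (A B : Matrix l m ℝ) (C : Matrix p q ℝ) :
    (A - B) ⊗ₖ C = A ⊗ₖ C - B ⊗ₖ C := by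
  ext i j; simp [sub_mul]

private lemma kron_sub_s5 {l m p q : Type*} (A : Matrix l m ℝ) (B C : Matrix p q ℝ) :
    A ⊗ₖ (B - C) = A ⊗ₖ B - A ⊗ₖ C := by
  ext i j; simp [mul_sub]

private lemma eq_zero_of_transpose_mul_self {m p : Type*} [Fintype m] (A : Matrix m p ℝ)
    (h : Aᵀ * A = 0) : A = 0 := by
  have h' : Aᴴ * A = 0 := by rwa [Matrix.conjTranspose_eq_transpose_of_trivial]
  exact Matrix.conjTranspose_mul_self_eq_zero.mp h'

private lemma cancel_left {a b c : Type*} [Fintype a] [Fintype b] [DecidableEq a]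
    {A : Matrix a b ℝ} {B : Matrix b a ℝ} (h : A * B = 1) (x : Matrix a c ℝ) :
    A * (B * x) = x := by rw [← Matrix.mul_assoc, h, Matrix.one_mul]

/-- K-FAC structure lemma: if `JᵀJ = S ⊗ T` with thin spectral decompositions
`S = U_S D_S U_Sᵀ`, `T = U_T D_T U_Tᵀ`, then `J` admits a thin SVD
`J = U (D_S^{1/2} ⊗ D_T^{1/2})(U_S ⊗ U_T)ᵀ` and, for the LoRA parametrization
`H = [I ⊗ B₀ | A₀ᵀ ⊗ I]`,
`JJ† − (JH)(JH)† = U [(I − Π_{D_S^{1/2}U_SᵀA₀ᵀ}) ⊗ (I − Π_{D_T^{1/2}U_TᵀB₀})] Uᵀ`. -/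
theorem kfac_projection_difference {n din dout rs rt r : ℕ}
    (J : Matrix (Fin n) (Fin din × Fin dout) ℝ)
    (S : Matrix (Fin din) (Fin din) ℝ) (T : Matrix (Fin dout) (Fin dout) ℝ)
    (US : Matrix (Fin din) (Fin rs) ℝ) (UT : Matrix (Fin dout) (Fin rt) ℝ)
    (dS : Fin rs → ℝ) (dT : Fin rt → ℝ)
    (hUS : USᵀ * US = 1) (hUT : UTᵀ * UT = 1)
    (hdS : ∀ i, 0 < dS i) (hdT : ∀ i, 0 < dT i)
    (hS : S = US * diagonal dS * USᵀ) (hT : T = UT * diagonal dT * UTᵀ)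
    (hkfac : Jᵀ * J = S ⊗ₖ T)
    (A₀ : Matrix (Fin r) (Fin din) ℝ) (B₀ : Matrix (Fin dout) (Fin r) ℝ)
    (H : Matrix (Fin din × Fin dout) ((Fin din × Fin r) ⊕ (Fin r × Fin dout)) ℝ)
    (hH : H = fromCols ((1 : Matrix (Fin din) (Fin din) ℝ) ⊗ₖ B₀)
                (A₀ᵀ ⊗ₖ (1 : Matrix (Fin dout) (Fin dout) ℝ)))
    (Jp : Matrix (Fin din × Fin dout) (Fin n) ℝ) (hJp : IsMPInv J Jp)
    (JHp : Matrix ((Fin din × Fin r) ⊕ (Fin r × Fin dout)) (Fin n) ℝ)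
    (hJHp : IsMPInv (J * H) JHp)
    (PAp : Matrix (Fin r) (Fin rs) ℝ)
    (hPAp : IsMPInv (diagonal (fun i => Real.sqrt (dS i)) * USᵀ * A₀ᵀ) PAp)
    (PBp : Matrix (Fin r) (Fin rt) ℝ)
    (hPBp : IsMPInv (diagonal (fun i => Real.sqrt (dT i)) * UTᵀ * B₀) PBp) :
    ∃ U : Matrix (Fin n) (Fin rs × Fin rt) ℝ,
      Uᵀ * U = 1 ∧
      J = U * (diagonal (fun i => Real.sqrt (dS i)) ⊗ₖ diagonal (fun i => Real.sqrt (dT i)))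
            * (US ⊗ₖ UT)ᵀ ∧
      J * Jp - (J * H) * JHp
        = U * (((1 : Matrix (Fin rs) (Fin rs) ℝ)
                  - (diagonal (fun i => Real.sqrt (dS i)) * USᵀ * A₀ᵀ) * PAp)
              ⊗ₖ ((1 : Matrix (Fin rt) (Fin rt) ℝ)
                  - (diagonal (fun i => Real.sqrt (dT i)) * UTᵀ * B₀) * PBp)) * Uᵀ := by
  obtain ⟨hJ1, hJ2, hJ3, hJ4⟩ := hJp
  obtain ⟨hH1, hH2, hH3, hH4⟩ := hJHp
  obtain ⟨hA1, hA2, hA3, hA4⟩ := hPAp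
  obtain ⟨hB1, hB2, hB3, hB4⟩ := hPBp
  have hsS : ∀ i, Real.sqrt (dS i) ≠ 0 := fun i => ne_of_gt (Real.sqrt_pos.mpr (hdS i))
  have hsT : ∀ i, Real.sqrt (dT i) ≠ 0 := fun i => ne_of_gt (Real.sqrt_pos.mpr (hdT i))
  set σS : Matrix (Fin rs) (Fin rs) ℝ := diagonal (fun i => Real.sqrt (dS i)) with hσS
  set σT : Matrix (Fin rt) (Fin rt) ℝ := diagonal (fun i => Real.sqrt (dT i)) with hσT
  set τS : Matrix (Fin rs) (Fin rs) ℝ := diagonal (fun i => (Real.sqrt (dS i))⁻¹) with hτS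
  set τT : Matrix (Fin rt) (Fin rt) ℝ := diagonal (fun i => (Real.sqrt (dT i))⁻¹) with hτT
  have hσSτS : σS * τS = 1 := by
    have e : (fun i => Real.sqrt (dS i) * (Real.sqrt (dS i))⁻¹)
        = fun _ => (1 : ℝ) := funext fun i => mul_inv_cancel₀ (hsS i)
    rw [hσS, hτS, diagonal_mul_diagonal, e, diagonal_one]
  have hτSσS : τS * σS = 1 := by
    have e : (fun i => (Real.sqrt (dS i))⁻¹ * Real.sqrt (dS i))
        = fun _ => (1 : ℝ) := funext fun i => inv_mul_cancel₀ (hsS i)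
    rw [hσS, hτS, diagonal_mul_diagonal, e, diagonal_one]
  have hσTτT : σT * τT = 1 := by
    have e : (fun i => Real.sqrt (dT i) * (Real.sqrt (dT i))⁻¹)
        = fun _ => (1 : ℝ) := funext fun i => mul_inv_cancel₀ (hsT i)
    rw [hσT, hτT, diagonal_mul_diagonal, e, diagonal_one]
  have hτTσT : τT * σT = 1 := by
    have e : (fun i => (Real.sqrt (dT i))⁻¹ * Real.sqrt (dT i))
        = fun _ => (1 : ℝ) := funext fun i => inv_mul_cancel₀ (hsT i)
    rw [hσT, hτT, diagonal_mul_diagonal, e, diagonal_one]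
  have hσS2 : σS * σS = diagonal dS := by
    have e : (fun i => Real.sqrt (dS i) * Real.sqrt (dS i)) = dS :=
      funext fun i => Real.mul_self_sqrt (hdS i).le
    rw [hσS, diagonal_mul_diagonal, e]
  have hσT2 : σT * σT = diagonal dT := by
    have e : (fun i => Real.sqrt (dT i) * Real.sqrt (dT i)) = dT :=
      funext fun i => Real.mul_self_sqrt (hdT i).le
    rw [hσT, diagonal_mul_diagonal, e]
  set V := US ⊗ₖ UT with hV
  set Sg := σS ⊗ₖ σT with hSg
  set Sgi := τS ⊗ₖ τT with hSgi
  have hVt : Vᵀ = USᵀ ⊗ₖ UTᵀ := by rw [hV, kron_transpose_s5]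
  have hVtV : Vᵀ * V = (1 : Matrix (Fin rs × Fin rt) (Fin rs × Fin rt) ℝ) := by
    rw [hVt, hV, ← mul_kronecker_mul, hUS, hUT, one_kronecker_one]
  have hSgSgi : Sg * Sgi = 1 := by
    rw [hSg, hSgi, ← mul_kronecker_mul, hσSτS, hσTτT, one_kronecker_one]
  have hSgiSg : Sgi * Sg = 1 := by
    rw [hSg, hSgi, ← mul_kronecker_mul, hτSσS, hτTσT, one_kronecker_one]
  have hSgit : Sgiᵀ = Sgi := by
    rw [hSgi, kron_transpose_s5, hτS, hτT, diagonal_transpose, diagonal_transpose]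
  have hD : diagonal dS ⊗ₖ diagonal dT = Sg * Sg := by
    rw [← hσS2, ← hσT2, mul_kronecker_mul]
  have hJtJ : Jᵀ * J = V * (Sg * (Sg * Vᵀ)) := by
    rw [hkfac, hS, hT, mul_kronecker_mul, mul_kronecker_mul, hD, ← kron_transpose_s5]
    simp only [← hV, Matrix.mul_assoc]
  set U := J * (V * Sgi) with hU
  have hU1 : Uᵀ * U = 1 := by
    have e : Uᵀ * U = Sgi * (Vᵀ * (Jᵀ * (J * (V * Sgi)))) := by
      rw [hU]; simp only [transpose_mul, hSgit, Matrix.mul_assoc]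
    rw [e, show Jᵀ * (J * (V * Sgi)) = Jᵀ * J * (V * Sgi) from (Matrix.mul_assoc _ _ _).symm,
      hJtJ]
    simp only [Matrix.mul_assoc]
    rw [cancel_left hVtV, cancel_left hVtV, hSgSgi, Matrix.mul_one, hSgiSg]
  have hJtX : Jᵀ * (J - J * (V * Vᵀ)) = 0 := by
    rw [Matrix.mul_sub, ← Matrix.mul_assoc, hJtJ]
    simp only [Matrix.mul_assoc]
    rw [cancel_left hVtV, sub_self]
  have h0 : (J - J * (V * Vᵀ))ᵀ * (J - J * (V * Vᵀ)) = 0 := by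
    rw [transpose_sub, Matrix.sub_mul, hJtX, transpose_mul, Matrix.mul_assoc, hJtX,
      Matrix.mul_zero, sub_zero]
  have hJVVt : J * (V * Vᵀ) = J :=
    (sub_eq_zero.mp (eq_zero_of_transpose_mul_self _ h0)).symm
  have hJsvd : J = U * Sg * Vᵀ := by
    rw [hU]
    simp only [Matrix.mul_assoc]
    rw [cancel_left hSgiSg, hJVVt]
  have e1 : U * (Uᵀ * J) = J := by
    conv_lhs => rw [hJsvd]
    simp only [Matrix.mul_assoc]
    rw [cancel_left hU1, ← Matrix.mul_assoc]
    exact hJsvd.symm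
  have e2 : J * (Jp * U) = U := by
    conv_lhs => rw [hU]
    rw [show J * (Jp * (J * (V * Sgi))) = J * Jp * J * (V * Sgi) by
      simp only [Matrix.mul_assoc], hJ1]
  have hJJp : J * Jp = U * Uᵀ := by
    have e3 : U * Uᵀ * (J * Jp) = J * Jp := by
      calc U * Uᵀ * (J * Jp) = U * (Uᵀ * J) * Jp := by simp only [Matrix.mul_assoc]
        _ = J * Jp := by rw [e1]
    have e4 : J * Jp * (U * Uᵀ) = U * Uᵀ := by
      calc J * Jp * (U * Uᵀ) = J * (Jp * U) * Uᵀ := by simp only [Matrix.mul_assoc]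
        _ = U * Uᵀ := by rw [e2]
    calc J * Jp = (J * Jp)ᵀ := hJ3.symm
      _ = (U * Uᵀ * (J * Jp))ᵀ := by rw [e3]
      _ = (J * Jp)ᵀ * (U * Uᵀ)ᵀ := transpose_mul _ _
      _ = J * Jp * (U * Uᵀ) := by rw [hJ3, transpose_mul, transpose_transpose]
      _ = U * Uᵀ := e4
  set PA := σS * USᵀ * A₀ᵀ with hPA
  set PB := σT * UTᵀ * B₀ with hPB
  set M := fromCols ((σS * USᵀ) ⊗ₖ PB) (PA ⊗ₖ (σT * UTᵀ)) with hM
  have step1 : Vᵀ * H = fromCols (USᵀ ⊗ₖ (UTᵀ * B₀)) ((USᵀ * A₀ᵀ) ⊗ₖ UTᵀ) := by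
    rw [hVt, hH, mul_fromCols, ← mul_kronecker_mul, ← mul_kronecker_mul,
      Matrix.mul_one, Matrix.mul_one]
  have step2 : Sg * (Vᵀ * H) = M := by
    rw [step1, hSg, hM, mul_fromCols, ← mul_kronecker_mul, ← mul_kronecker_mul, hPA, hPB]
    simp only [Matrix.mul_assoc]
  have hJH : J * H = U * M := by
    conv_lhs => rw [hJsvd]
    rw [Matrix.mul_assoc, Matrix.mul_assoc, step2]
  set Q := (1 - PA * PAp) ⊗ₖ (1 - PB * PBp) with hQ
  have hABzero : (1 - PA * PAp) * PA = 0 := by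
    rw [Matrix.sub_mul, Matrix.one_mul, hA1, sub_self]
  have hBBzero : (1 - PB * PBp) * PB = 0 := by
    rw [Matrix.sub_mul, Matrix.one_mul, hB1, sub_self]
  have hQM : Q * M = 0 := by
    rw [hQ, hM, mul_fromCols, ← mul_kronecker_mul, ← mul_kronecker_mul, hABzero,
      hBBzero, kronecker_zero, zero_kronecker, fromCols_zero]
  set W := fromRows ((US * τS) ⊗ₖ PBp) (PAp ⊗ₖ (UT * (τT * (1 - PB * PBp)))) with hW
  have c1 : σS * USᵀ * (US * τS) = 1 := by
    rw [Matrix.mul_assoc, cancel_left hUS, hσSτS]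
  have c2 : σT * UTᵀ * (UT * (τT * (1 - PB * PBp))) = 1 - PB * PBp := by
    rw [Matrix.mul_assoc, cancel_left hUT, ← Matrix.mul_assoc, hσTτT, Matrix.one_mul]
  have hMW : M * W = 1 - Q := by
    rw [hM, hW, fromCols_mul_fromRows, ← mul_kronecker_mul, ← mul_kronecker_mul, c1, c2]
    simp only [hQ, sub_kron_s5, kron_sub_s5, one_kronecker_one]
    abel
  have hQt : Qᵀ = Q := by
    simp only [hQ, kron_transpose_s5, transpose_sub, transpose_one, hA3, hB3]
  have hP1 : U * (1 - Q) * Uᵀ * (J * H) = J * H := by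
    rw [hJH]
    simp only [Matrix.mul_assoc]
    rw [cancel_left hU1, Matrix.sub_mul, Matrix.one_mul, hQM, sub_zero]
  have hP2 : J * H * (W * Uᵀ) = U * (1 - Q) * Uᵀ := by
    rw [hJH]
    simp only [Matrix.mul_assoc]
    rw [← Matrix.mul_assoc M W, hMW]
  have hP0P : J * H * JHp * (U * (1 - Q) * Uᵀ) = U * (1 - Q) * Uᵀ := by
    rw [← hP2, ← Matrix.mul_assoc, hH1]
  have hPP0 : U * (1 - Q) * Uᵀ * (J * H * JHp) = J * H * JHp := by
    rw [← Matrix.mul_assoc, hP1]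
  have hPt : (U * (1 - Q) * Uᵀ)ᵀ = U * (1 - Q) * Uᵀ := by
    simp only [transpose_mul, transpose_transpose, transpose_sub, transpose_one, hQt,
      Matrix.mul_assoc]
  have hP0eq : J * H * JHp = U * (1 - Q) * Uᵀ := by
    have h5 : U * (1 - Q) * Uᵀ * (J * H * JHp) = U * (1 - Q) * Uᵀ := by
      have h6 := congrArg Matrix.transpose hP0P
      rwa [transpose_mul, hPt, hH3] at h6
    rw [← hPP0, h5]
  refine ⟨U, hU1, hJsvd, ?_⟩
  rw [hJJp, hP0eq, Matrix.mul_sub, Matrix.mul_one, Matrix.sub_mul, sub_sub_cancel]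
end

section
/- Assume J ∈ ℝ^{n×(d_in·d_out)} satisfies JᵀJ = S ⊗ T with thin spectral decompositions S = U_S D_S U_Sᵀ (rank r_s) and T = U_T D_T U_Tᵀ (rank r_t) as above. Let z ∈ ℝⁿ, let G ∈ ℝ^{d_out×d_in} be the matrix with vec(G) = −Jᵀz (the loss gradient at the pretrained point), and define the whitened gradient F := D_T^{−1/2} U_Tᵀ G U_S D_S^{−1/2} ∈ ℝ^{r_t×r_s}. Then for any A₀ ∈ ℝ^{r×d_in}, B₀ ∈ ℝ^{d_out×r} and H = [ I ⊗ B₀ | A₀ᵀ ⊗ I ]: ‖(JJ† − (JH)(JH)†) z‖₂ = ‖(I_{r_t} − Π_{D_T^{1/2} U_Tᵀ B₀}) F (I_{r_s} − Π_{D_S^{1/2} U_Sᵀ A₀ᵀ})‖_F ≥ ( Σ_{i ≥ 2r+1} s_i(F)² )^{1/2}, where s_1(F) ≥ s_2(F) ≥ … are the singular values of F. -/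
open Matrix
open scoped Kronecker

/-- Euclidean norm of a vector. -/
noncomputable def enorm {ι : Type*} [Fintype ι] (v : ι → ℝ) : ℝ :=
  Real.sqrt (∑ i, v i ^ 2)

/-- Frobenius norm of a matrix. -/
noncomputable def frobNorm {ι κ : Type*} [Fintype ι] [Fintype κ] (A : Matrix ι κ ℝ) : ℝ :=
  Real.sqrt (∑ i, ∑ j, A i j ^ 2)

section AuxTrace
variable {ι κ : Type*} [Fintype ι] [Fintype κ]

lemma tno_expand (A B : Matrix ι κ ℝ) :
    ((A+B)ᵀ*(A+B)).trace = (Aᵀ*A).trace + 2*(Aᵀ*B).trace + (Bᵀ*B).trace := by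
  have h : (Bᵀ*A).trace = (Aᵀ*B).trace := by
    rw [← Matrix.trace_transpose (Bᵀ*A), Matrix.transpose_mul, Matrix.transpose_transpose]
  simp [Matrix.transpose_add, Matrix.add_mul, Matrix.mul_add, Matrix.trace_add, h]
  ring

lemma tno_nonneg (A : Matrix ι κ ℝ) : 0 ≤ (Aᵀ*A).trace := by
  rw [Matrix.trace]
  refine Finset.sum_nonneg fun j _ => ?_
  rw [Matrix.diag_apply, Matrix.mul_apply]
  exact Finset.sum_nonneg fun i _ => by simp [Matrix.transpose_apply]; exact mul_self_nonneg _

lemma tno_pythagoras (A B : Matrix ι κ ℝ) (h : (Aᵀ*B).trace = 0) :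
    ((A+B)ᵀ*(A+B)).trace = (Aᵀ*A).trace + (Bᵀ*B).trace := by
  rw [tno_expand, h]; ring

lemma tno_ge_left (A B : Matrix ι κ ℝ) (h : (Aᵀ*B).trace = 0) :
    (Aᵀ*A).trace ≤ ((A+B)ᵀ*(A+B)).trace := by
  rw [tno_pythagoras A B h]
  linarith [tno_nonneg B]

lemma enorm_eq_dot (v : ι → ℝ) : _root_.enorm v = Real.sqrt (v ⬝ᵥ v) := by
  simp [_root_.enorm, dotProduct, sq]

lemma frobNorm_eq_trace (A : Matrix ι κ ℝ) : frobNorm A = Real.sqrt ((Aᵀ*A).trace) := by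
  rw [frobNorm]
  congr 1
  rw [Finset.sum_comm]
  simp only [Matrix.trace, Matrix.diag_apply, Matrix.mul_apply, Matrix.transpose_apply, pow_two]

lemma symIdem_diag_nonneg {M : Matrix ι ι ℝ} (hs : Mᵀ = M) (hi : M*M = M) (i : ι) :
    0 ≤ M i i := by
  have h : M i i = ∑ k, M i k ^2 := by
    conv_lhs => rw [← hi]
    rw [Matrix.mul_apply]
    refine Finset.sum_congr rfl fun k _ => ?_
    have h2 : M k i = M i k := by conv_lhs => rw [← hs, Matrix.transpose_apply]
    rw [h2]; ring
  rw [h]; exact Finset.sum_nonneg fun k _ => sq_nonneg _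

lemma symIdem_diag_le_one {M : Matrix ι ι ℝ} (hs : Mᵀ = M) (hi : M*M = M) (i : ι) :
    M i i ≤ 1 := by
  have h : M i i = ∑ k, M i k ^2 := by
    conv_lhs => rw [← hi]
    rw [Matrix.mul_apply]
    refine Finset.sum_congr rfl fun k _ => ?_
    have h2 : M k i = M i k := by conv_lhs => rw [← hs, Matrix.transpose_apply]
    rw [h2]; ring
  have h2 : M i i ^ 2 ≤ M i i := by
    nth_rewrite 2 [h]
    exact Finset.single_le_sum (f := fun k => M i k ^2) (fun k _ => sq_nonneg _) (Finset.mem_univ i)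
  nlinarith

lemma tno_mul_proj_le [DecidableEq κ] (M : Matrix ι κ ℝ) (P : Matrix κ κ ℝ)
    (hs : Pᵀ = P) (hi : P*P = P) :
    ((M*P)ᵀ*(M*P)).trace ≤ (Mᵀ*M).trace := by
  have hM : M = M*P + M*(1-P) := by rw [← Matrix.mul_add]; simp
  have horth : ((M*P)ᵀ*(M*(1-P))).trace = 0 := by
    have h1 : (M*P)ᵀ*(M*(1-P)) = P*(Mᵀ*(M*(1-P))) := by
      rw [Matrix.transpose_mul, hs]; simp only [Matrix.mul_assoc]
    have h0 : (1-P)*P = 0 := by rw [Matrix.sub_mul, Matrix.one_mul, hi]; simp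
    rw [h1, Matrix.trace_mul_comm]
    have h2 : (Mᵀ*(M*(1-P)))*P = Mᵀ*(M*((1-P)*P)) := by simp only [Matrix.mul_assoc]
    rw [h2, h0]
    simp
  calc ((M*P)ᵀ*(M*P)).trace
      ≤ ((M*P)ᵀ*(M*P)).trace + ((M*(1-P))ᵀ*(M*(1-P))).trace := by
        linarith [tno_nonneg (M*(1-P))]
    _ = (((M*P)+(M*(1-P)))ᵀ*((M*P)+(M*(1-P)))).trace := (tno_pythagoras _ _ horth).symm
    _ = (Mᵀ*M).trace := by rw [← hM]

end AuxTrace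

section AuxCollapse
variable {a b c κ : Type*} [Fintype a] [Fintype b] [Fintype c] [Fintype κ]

lemma collapse1 [DecidableEq a] {A : Matrix a b ℝ} {B : Matrix b a ℝ} (h : A*B = 1) (X : Matrix a κ ℝ) :
    A*(B*X) = X := by
  rw [← Matrix.mul_assoc, h, Matrix.one_mul]

lemma collapse2 {A : Matrix a b ℝ} {B : Matrix b c ℝ} {C : Matrix a c ℝ} (h : A*B = C)
    (X : Matrix c κ ℝ) : A*(B*X) = C*X := by
  rw [← Matrix.mul_assoc, h]

lemma tno_conj [DecidableEq a] [DecidableEq c] (U : Matrix a a ℝ) (V : Matrix c c ℝ)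
    (M : Matrix a c ℝ) (hU : U*Uᵀ = 1) (hV : V*Vᵀ = 1) :
    ((Uᵀ*(M*V))ᵀ*(Uᵀ*(M*V))).trace = (Mᵀ*M).trace := by
  have h1 : (Uᵀ*(M*V))ᵀ*(Uᵀ*(M*V)) = Vᵀ*(Mᵀ*(M*V)) := by
    rw [Matrix.transpose_mul, Matrix.transpose_transpose, Matrix.transpose_mul]
    simp only [Matrix.mul_assoc, collapse1 hU]
  rw [h1, Matrix.trace_mul_comm]
  have h2 : (Mᵀ*(M*V))*Vᵀ = Mᵀ*(M*(V*Vᵀ)) := by simp only [Matrix.mul_assoc]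
  rw [h2, hV, Matrix.mul_one]

end AuxCollapse

section AuxVec

/-- vec operator matching the paper's column-stacking with index (col, row). -/
def vec' {dout din : Type*} (W : Matrix dout din ℝ) : din × dout → ℝ := fun p => W p.2 p.1

variable {dout din dout' din' : Type*} [Fintype dout] [Fintype din] [Fintype dout'] [Fintype din']

lemma vec'_inj {W1 W2 : Matrix dout din ℝ} (h : vec' W1 = vec' W2) : W1 = W2 := by
  ext i j
  exact congrFun h (j, i)

lemma vec'_add (W1 W2 : Matrix dout din ℝ) : vec' W1 + vec' W2 = vec' (W1 + W2) := by
  funext p; simp [vec']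

lemma bridge_dot (W1 W2 : Matrix dout din ℝ) : vec' W1 ⬝ᵥ vec' W2 = (W1ᵀ*W2).trace := by
  simp only [Matrix.trace, Matrix.diag_apply, Matrix.mul_apply, Matrix.transpose_apply,
    dotProduct, vec']
  rw [Fintype.sum_prod_type]

lemma bridge_kron (X : Matrix din din' ℝ) (Y : Matrix dout dout' ℝ) (W : Matrix dout' din' ℝ) :
    (Matrix.kroneckerMap (· * ·) X Y).mulVec (vec' W) = vec' (Y*W*Xᵀ) := by
  funext p
  obtain ⟨j, i⟩ := p
  simp only [Matrix.mulVec, dotProduct, vec', Matrix.kroneckerMap_apply, Matrix.mul_apply,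
    Matrix.transpose_apply]
  rw [Fintype.sum_prod_type]
  refine Finset.sum_congr rfl fun j' _ => ?_
  rw [Finset.sum_mul]
  refine Finset.sum_congr rfl fun i' _ => ?_
  show X j j' * Y i i' * W i' j' = Y i i' * W i' j' * X j j'
  ring

end AuxVec

section AuxProj
variable {n p : Type*} [Fintype n] [Fintype p]

lemma dd (A : Matrix n n ℝ) (B : Matrix n p ℝ) (z' : n → ℝ) (w : p → ℝ) :
    (A *ᵥ z') ⬝ᵥ (B *ᵥ w) = z' ⬝ᵥ ((Aᵀ*B) *ᵥ w) := by
  rw [← Matrix.mulVec_mulVec, Matrix.dotProduct_mulVec z' Aᵀ, Matrix.vecMul_transpose]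

lemma dd2 {q : Type*} [Fintype q] (A : Matrix n q ℝ) (B : Matrix n p ℝ) (z' : q → ℝ) (w : p → ℝ) :
    (A *ᵥ z') ⬝ᵥ (B *ᵥ w) = z' ⬝ᵥ ((Aᵀ*B) *ᵥ w) := by
  rw [← Matrix.mulVec_mulVec, Matrix.dotProduct_mulVec z' Aᵀ, Matrix.vecMul_transpose]

lemma dot_sub_sq (a b : n → ℝ) :
    (a - b) ⬝ᵥ (a - b) = a ⬝ᵥ a - 2*(a ⬝ᵥ b) + b ⬝ᵥ b := by
  have h := dotProduct_comm a b
  simp only [dotProduct_sub, sub_dotProduct]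
  rw [h]
  ring

lemma mp_proj_sym {M : Matrix n p ℝ} {Mp : Matrix p n ℝ} (h : IsMPInv M Mp) :
    (M*Mp)ᵀ * (M*Mp) = M*Mp := by
  rw [h.2.2.1]
  calc M*Mp*(M*Mp) = M*Mp*M*Mp := by rw [Matrix.mul_assoc (M*Mp) M Mp]
    _ = M*Mp := by rw [h.1]

lemma proj_quad {M : Matrix n p ℝ} {Mp : Matrix p n ℝ} (h : IsMPInv M Mp) (z : n → ℝ) :
    (z - M *ᵥ (Mp *ᵥ z)) ⬝ᵥ (z - M *ᵥ (Mp *ᵥ z)) = z ⬝ᵥ z - z ⬝ᵥ ((M*Mp) *ᵥ z) := by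
  have hw : (M *ᵥ (Mp *ᵥ z)) = (M*Mp) *ᵥ z := Matrix.mulVec_mulVec z M Mp
  rw [hw]
  set w := (M*Mp) *ᵥ z with hwdef
  have hww : w ⬝ᵥ w = z ⬝ᵥ ((M*Mp) *ᵥ z) := by
    rw [hwdef, dd, mp_proj_sym h]
  have hzw : z ⬝ᵥ w = w ⬝ᵥ z := dotProduct_comm z w
  simp only [dotProduct_sub, sub_dotProduct]
  rw [hww]
  have : w ⬝ᵥ z = z ⬝ᵥ ((M*Mp) *ᵥ z) := by
    rw [← hzw]
  rw [this]
  ring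

lemma proj_min {M : Matrix n p ℝ} {Mp : Matrix p n ℝ} (h : IsMPInv M Mp) (z : n → ℝ)
    (x : p → ℝ) :
    z ⬝ᵥ z - z ⬝ᵥ ((M*Mp) *ᵥ z) ≤ (z - M *ᵥ x) ⬝ᵥ (z - M *ᵥ x) := by
  set u := z - M *ᵥ (Mp *ᵥ z) with hu
  set v := (M *ᵥ (Mp *ᵥ z)) - M *ᵥ x with hv
  have hsplit : z - M *ᵥ x = u + v := by rw [hu, hv]; abel
  have hMv : v = M *ᵥ (Mp *ᵥ z - x) := by rw [hv, Matrix.mulVec_sub]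
  have huv : u ⬝ᵥ v = 0 := by
    rw [hMv, hu]
    have h1 : (z - M *ᵥ (Mp *ᵥ z)) ⬝ᵥ (M *ᵥ (Mp *ᵥ z - x))
        = z ⬝ᵥ (M *ᵥ (Mp *ᵥ z - x)) - z ⬝ᵥ (((M*Mp)ᵀ * M) *ᵥ (Mp *ᵥ z - x)) := by
      rw [Matrix.mulVec_mulVec, sub_dotProduct]
      congr 1
      exact dd (M*Mp) M z _
    have h2 : (M*Mp)ᵀ * M = M := by
      rw [h.2.2.1]; exact h.1
    rw [h1, h2]
    ring
  have hq := proj_quad h z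
  calc z ⬝ᵥ z - z ⬝ᵥ ((M*Mp) *ᵥ z) = u ⬝ᵥ u := hq.symm
    _ ≤ u ⬝ᵥ u + v ⬝ᵥ v := by
        have : (0:ℝ) ≤ v ⬝ᵥ v := by
          simp only [dotProduct]
          exact Finset.sum_nonneg fun i _ => mul_self_nonneg _
        linarith
    _ = (z - M *ᵥ x) ⬝ᵥ (z - M *ᵥ x) := by
        rw [hsplit]
        simp only [dotProduct_add, add_dotProduct]
        rw [huv, dotProduct_comm v u, huv]
        ring

lemma proj_value {M : Matrix n p ℝ} {Mp : Matrix p n ℝ} (h : IsMPInv M Mp) (z : n → ℝ)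
    (tF β : ℝ) (φ : (p → ℝ) → ℝ)
    (hφ : ∀ x, (z - M *ᵥ x) ⬝ᵥ (z - M *ᵥ x) = z ⬝ᵥ z - tF + φ x)
    (hβ : ∀ x, β ≤ φ x) (hex : ∃ x, φ x = β) :
    z ⬝ᵥ ((M*Mp) *ᵥ z) = tF - β := by
  obtain ⟨xh, hxh⟩ := hex
  have h1 : z ⬝ᵥ z - z ⬝ᵥ ((M*Mp) *ᵥ z) = z ⬝ᵥ z - tF + φ (Mp *ᵥ z) := by
    rw [← hφ]
    exact (proj_quad h z).symm
  have h2 : z ⬝ᵥ z - z ⬝ᵥ ((M*Mp) *ᵥ z) ≤ z ⬝ᵥ z - tF + β := by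
    rw [← hxh, ← hφ]
    exact proj_min h z xh
  have h3 := hβ (Mp *ᵥ z)
  linarith

end AuxProj

lemma tail_bound (s : ℕ → ℝ) (hs_anti : ∀ i j, i ≤ j → s j ≤ s i) (hs0 : ∀ i, 0 ≤ s i)
    (m t : ℕ) (d : ℕ → ℝ) (hd0 : ∀ k, 0 ≤ d k) (hd1 : ∀ k, d k ≤ 1)
    (hsum : (m:ℝ) - t ≤ ∑ k ∈ Finset.range m, d k) :
    ∑ k ∈ Finset.Ico t m, s k ^2 ≤ ∑ k ∈ Finset.range m, s k ^2 * d k := by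
  rcases le_or_gt m t with hmt | htm
  · rw [Finset.Ico_eq_empty (by omega)]
    simp only [Finset.sum_empty]
    exact Finset.sum_nonneg fun k _ => mul_nonneg (sq_nonneg _) (hd0 k)
  · have htm' : t ≤ m := htm.le
    have hsplit : ∑ k ∈ Finset.range m, s k ^2 * d k
        = ∑ k ∈ Finset.range t, s k ^2 * d k + ∑ k ∈ Finset.Ico t m, s k ^2 * d k :=
      (Finset.sum_range_add_sum_Ico _ htm').symm
    have hdecomp : ∑ k ∈ Finset.range m, d k
        = ∑ k ∈ Finset.range t, d k + ∑ k ∈ Finset.Ico t m, d k :=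
      (Finset.sum_range_add_sum_Ico _ htm').symm
    have h1 : (s t)^2 * ∑ k ∈ Finset.range t, d k ≤ ∑ k ∈ Finset.range t, s k ^2 * d k := by
      rw [Finset.mul_sum]
      refine Finset.sum_le_sum fun k hk => ?_
      have hk' : k ≤ t := (Finset.mem_range.mp hk).le
      have ha := hs_anti k t hk'
      have hb := hs0 t
      have hsq : s t^2 ≤ s k^2 := by nlinarith
      exact mul_le_mul_of_nonneg_right hsq (hd0 k)
    have h2 : ∑ k ∈ Finset.Ico t m, s k ^2 - ∑ k ∈ Finset.Ico t m, s k ^2 * d k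
        ≤ (s t)^2 * (((m:ℝ) - t) - ∑ k ∈ Finset.Ico t m, d k) := by
      have hcard : ∑ k ∈ Finset.Ico t m, ((1:ℝ) - d k)
          = ((m:ℝ) - t) - ∑ k ∈ Finset.Ico t m, d k := by
        rw [Finset.sum_sub_distrib]
        congr 1
        rw [Finset.sum_const, Nat.card_Ico, nsmul_eq_mul, mul_one]
        push_cast [Nat.cast_sub htm']
        ring
      rw [← hcard, ← Finset.sum_sub_distrib, Finset.mul_sum]
      refine Finset.sum_le_sum fun k hk => ?_
      have hk' : t ≤ k := (Finset.mem_Ico.mp hk).1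
      have ha := hs_anti t k hk'
      have hb := hs0 k
      have hsq : s k^2 ≤ s t^2 := by nlinarith [hs0 t]
      nlinarith [mul_le_mul_of_nonneg_right hsq (by linarith [hd1 k] : (0:ℝ) ≤ 1 - d k)]
    have hbr : (0:ℝ) ≤ (s t)^2 * ((∑ k ∈ Finset.range t, d k + ∑ k ∈ Finset.Ico t m, d k) - ((m:ℝ) - t)) := by
      refine mul_nonneg (sq_nonneg _) ?_
      rw [← hdecomp]; linarith
    nlinarith [h1, h2, hsplit, hbr]

lemma low_rank_tail {rt rs t : ℕ} (s : ℕ → ℝ)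
    (hs_anti : ∀ i j, i ≤ j → s j ≤ s i) (hs0 : ∀ i, 0 ≤ s i)
    (N : Matrix (Fin rt) (Fin rs) ℝ)
    (hrank : ((Matrix.of fun (i : Fin rt) (j : Fin rs) =>
        if (i:ℕ) = (j:ℕ) then s i else 0) - N).rank ≤ t) :
    ∑ k ∈ Finset.Ico t (min rt rs), s k ^2 ≤ (Nᵀ*N).trace := by
  set S0 : Matrix (Fin rt) (Fin rs) ℝ :=
    Matrix.of (fun (i : Fin rt) (j : Fin rs) => if (i:ℕ) = (j:ℕ) then s i else 0) with hS0
  set X : Matrix (Fin rt) (Fin rs) ℝ := S0 - N with hX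
  let e := WithLp.linearEquiv 2 ℝ (Fin rs → ℝ)
  let g : EuclideanSpace ℝ (Fin rs) →ₗ[ℝ] (Fin rt → ℝ) := (Matrix.mulVecLin X).comp e.toLinearMap
  let K : Submodule ℝ (EuclideanSpace ℝ (Fin rs)) := LinearMap.ker g
  let kk := Module.finrank ℝ K
  have hdim : (rs:ℝ) - t ≤ (kk:ℝ) := by
    have h1 := LinearMap.finrank_range_add_finrank_ker g
    have h2 : LinearMap.range g = LinearMap.range (Matrix.mulVecLin X) :=
      LinearMap.range_comp_of_range_eq_top _ (LinearEquiv.range e)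
    have h3 : Module.finrank ℝ (EuclideanSpace ℝ (Fin rs)) = rs := finrank_euclideanSpace_fin
    rw [h2, h3] at h1
    have h4 : Module.finrank ℝ (LinearMap.range (Matrix.mulVecLin X)) = X.rank := rfl
    rw [h4] at h1
    have h5 : X.rank ≤ t := hrank
    have h6 : X.rank + kk = rs := h1
    have h7 : (X.rank:ℝ) + (kk:ℝ) = rs := by exact_mod_cast h6
    have h8 : (X.rank:ℝ) ≤ t := by exact_mod_cast h5
    linarith
  let B := stdOrthonormalBasis ℝ K
  let u : Fin kk → (Fin rs → ℝ) := fun k => e ((B k : K) : EuclideanSpace ℝ (Fin rs))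
  have hu : ∀ k, u k = e ((B k : K) : EuclideanSpace ℝ (Fin rs)) := fun k => rfl
  have huorth : ∀ k l, ∑ a, u k a * u l a = if k = l then (1:ℝ) else 0 := by
    intro k l
    have h1 : (inner ℝ ((B k : K) : EuclideanSpace ℝ (Fin rs)) ((B l : K) : EuclideanSpace ℝ (Fin rs)) : ℝ)
        = if k = l then 1 else 0 := by
      rw [← Submodule.coe_inner]
      exact orthonormal_iff_ite.mp B.orthonormal k l
    rw [PiLp.inner_apply] at h1
    simp only [RCLike.inner_apply, conj_trivial] at h1
    rw [← h1]
    exact Finset.sum_congr rfl fun a _ => mul_comm _ _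
  have hker : ∀ k, X.mulVec (u k) = 0 := by
    intro k
    have hm := (B k).2
    rw [LinearMap.mem_ker] at hm
    have : g ((B k : K) : EuclideanSpace ℝ (Fin rs)) = X.mulVec (u k) := rfl
    rw [this] at hm
    exact hm
  set P : Matrix (Fin rs) (Fin rs) ℝ := Matrix.of (fun a b => ∑ k, u k a * u k b) with hP
  have hPs : Pᵀ = P := by
    ext a b
    simp only [hP, Matrix.transpose_apply, Matrix.of_apply]
    exact Finset.sum_congr rfl fun k _ => mul_comm _ _
  have hPi : P*P = P := by
    ext a b
    simp only [hP, Matrix.mul_apply, Matrix.of_apply]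
    calc ∑ c, (∑ k, u k a * u k c) * (∑ l, u l c * u l b)
        = ∑ c, ∑ k, ∑ l, (u k a * u l b) * (u k c * u l c) := by
          refine Finset.sum_congr rfl fun c _ => ?_
          rw [Finset.sum_mul]
          refine Finset.sum_congr rfl fun k _ => ?_
          rw [Finset.mul_sum]
          exact Finset.sum_congr rfl fun l _ => by ring
      _ = ∑ k, ∑ l, (u k a * u l b) * (∑ c, u k c * u l c) := by
          rw [Finset.sum_comm]
          refine Finset.sum_congr rfl fun k _ => ?_
          rw [Finset.sum_comm]
          refine Finset.sum_congr rfl fun l _ => ?_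
          rw [Finset.mul_sum]
      _ = ∑ k, u k a * u k b := by
          refine Finset.sum_congr rfl fun k _ => ?_
          rw [Finset.sum_eq_single k]
          · rw [huorth k k]; simp
          · intro l _ hlk
            rw [huorth k l, if_neg (fun h => hlk h.symm)]
            ring
          · intro h; exact absurd (Finset.mem_univ k) h
  have hXP : X * P = 0 := by
    ext i b
    simp only [Matrix.mul_apply, hP, Matrix.of_apply, Matrix.zero_apply]
    calc ∑ a, X i a * ∑ k, u k a * u k b
        = ∑ a, ∑ k, X i a * (u k a * u k b) := by
          exact Finset.sum_congr rfl fun a _ => Finset.mul_sum _ _ _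
      _ = ∑ k, ∑ a, X i a * (u k a * u k b) := Finset.sum_comm
      _ = ∑ k, (∑ a, X i a * u k a) * u k b := by
          refine Finset.sum_congr rfl fun k _ => ?_
          rw [Finset.sum_mul]
          refine Finset.sum_congr rfl fun a _ => by ring
      _ = 0 := by
          refine Finset.sum_eq_zero fun k _ => ?_
          have : ∑ a, X i a * u k a = 0 := by
            have h0 := congrFun (hker k) i
            simpa [Matrix.mulVec, dotProduct] using h0
          rw [this, zero_mul]
  have htrP : ∑ a, P a a = (kk:ℝ) := by
    simp only [hP, Matrix.of_apply]
    rw [Finset.sum_comm]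
    have : ∀ k : Fin kk, ∑ a, u k a * u k a = 1 := by
      intro k; rw [huorth k k, if_pos rfl]
    rw [Finset.sum_congr rfl (fun k _ => this k)]
    simp
  have hNP : N * P = S0 * P := by
    have h0 : S0 * P - N * P = 0 := by rw [← Matrix.sub_mul, ← hX, hXP]
    have := sub_eq_zero.mp h0
    exact this.symm
  have h5 : ((S0*P)ᵀ*(S0*P)).trace ≤ (Nᵀ*N).trace := by
    rw [← hNP]; exact tno_mul_proj_le N P hPs hPi
  have hdiag : S0ᵀ*S0 = Matrix.diagonal (fun j : Fin rs => if (j:ℕ) < rt then s (j:ℕ)^2 else 0) := by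
    ext a b
    rw [Matrix.mul_apply]
    by_cases hab : a = b
    · subst hab
      rw [Matrix.diagonal_apply_eq]
      by_cases har : (a:ℕ) < rt
      · rw [if_pos har, Finset.sum_eq_single (⟨(a:ℕ), har⟩ : Fin rt)]
        · simp only [Matrix.transpose_apply, hS0, Matrix.of_apply]
          simp [pow_two]
        · intro i _ hia
          have hne : ¬ ((i:ℕ) = (a:ℕ)) := fun h => hia (by apply Fin.ext; simpa using h)
          simp only [Matrix.transpose_apply, hS0, Matrix.of_apply]
          simp [hne]
        · intro h; exact absurd (Finset.mem_univ _) h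
      · rw [if_neg har, Finset.sum_eq_zero]
        intro i _
        have hne : ¬ ((i:ℕ) = (a:ℕ)) := fun h => har (h ▸ i.2)
        simp only [Matrix.transpose_apply, hS0, Matrix.of_apply]
        simp [hne]
    · rw [Matrix.diagonal_apply_ne _ hab, Finset.sum_eq_zero]
      intro i _
      by_cases h1 : (i:ℕ) = (a:ℕ)
      · have h2 : ¬ ((i:ℕ) = (b:ℕ)) := by
          intro h2
          exact hab (Fin.ext (by omega))
        simp only [Matrix.transpose_apply, hS0, Matrix.of_apply]
        simp [h2]
      · simp only [Matrix.transpose_apply, hS0, Matrix.of_apply]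
        simp [h1]
  have h6 : ((S0*P)ᵀ*(S0*P)).trace
      = ∑ j : Fin rs, (if (j:ℕ) < rt then s (j:ℕ)^2 else 0) * P j j := by
    have e1 : (S0*P)ᵀ*(S0*P) = P*((S0ᵀ*S0)*P) := by
      rw [Matrix.transpose_mul, hPs]; simp only [Matrix.mul_assoc]
    rw [e1, Matrix.trace_mul_comm]
    have e2 : ((S0ᵀ*S0)*P)*P = (S0ᵀ*S0)*(P*P) := by simp only [Matrix.mul_assoc]
    rw [e2, hPi, hdiag]
    rw [Matrix.trace]
    refine Finset.sum_congr rfl fun j _ => ?_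
    rw [Matrix.diag_apply, Matrix.diagonal_mul]
  rw [h6] at h5
  refine le_trans ?_ h5
  set d : ℕ → ℝ := fun k => if h : k < rs then P ⟨k,h⟩ ⟨k,h⟩ else 0 with hd
  have hd0 : ∀ k, 0 ≤ d k := by
    intro k
    rw [hd]
    by_cases h : k < rs
    · simpa [h] using symIdem_diag_nonneg hPs hPi ⟨k,h⟩
    · simp [h]
  have hd1 : ∀ k, d k ≤ 1 := by
    intro k
    rw [hd]
    by_cases h : k < rs
    · simpa [h] using symIdem_diag_le_one hPs hPi ⟨k,h⟩
    · simp [h]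
  have hfin : ∑ j : Fin rs, (if (j:ℕ) < rt then s (j:ℕ)^2 else 0) * P j j
      = ∑ k ∈ Finset.range rs, (if k < rt then s k^2 else 0) * d k := by
    rw [← Fin.sum_univ_eq_sum_range]
    refine Finset.sum_congr rfl fun j _ => ?_
    simp only [hd]
    rw [dif_pos j.2]
  have hdsum : ∑ k ∈ Finset.range rs, d k = (kk:ℝ) := by
    rw [← htrP, ← Fin.sum_univ_eq_sum_range]
    refine Finset.sum_congr rfl fun j _ => ?_
    simp only [hd]
    rw [dif_pos j.2]
  set m := min rt rs with hm
  have hmrs : m ≤ rs := min_le_right _ _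
  have hmd : (m:ℝ) - t ≤ ∑ k ∈ Finset.range m, d k := by
    have hsp : ∑ k ∈ Finset.range rs, d k
        = ∑ k ∈ Finset.range m, d k + ∑ k ∈ Finset.Ico m rs, d k :=
      (Finset.sum_range_add_sum_Ico _ hmrs).symm
    have hub : ∑ k ∈ Finset.Ico m rs, d k ≤ ((rs - m : ℕ):ℝ) := by
      calc ∑ k ∈ Finset.Ico m rs, d k ≤ ∑ k ∈ Finset.Ico m rs, (1:ℝ) :=
            Finset.sum_le_sum fun k _ => hd1 k
        _ = ((rs - m : ℕ):ℝ) := by rw [Finset.sum_const, Nat.card_Ico, nsmul_eq_mul, mul_one]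
    have hc : ((rs - m : ℕ):ℝ) = (rs:ℝ) - m := by
      push_cast [Nat.cast_sub hmrs]; ring
    rw [hc] at hub
    rw [hdsum] at hsp
    linarith
  have htb := tail_bound s hs_anti hs0 m t d hd0 hd1 hmd
  rw [hfin]
  refine le_trans htb ?_
  have hagree : ∑ k ∈ Finset.range m, s k ^2 * d k
      = ∑ k ∈ Finset.range m, (if k < rt then s k^2 else 0) * d k := by
    refine Finset.sum_congr rfl fun k hk => ?_
    have : k < rt := lt_of_lt_of_le (Finset.mem_range.mp hk) (min_le_left _ _)
    rw [if_pos this]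
  rw [hagree]
  refine Finset.sum_le_sum_of_subset_of_nonneg ?_ ?_
  · exact Finset.range_subset_range.mpr hmrs
  · intro k _ _
    refine mul_nonneg ?_ (hd0 k)
    by_cases h : k < rt
    · simp [h, sq_nonneg]
    · simp [h]

/-- Optimal alignment: under the K-FAC assumption `JᵀJ = S ⊗ T`, with `G` the loss gradient
(`vec(G) = −Jᵀz`) and `F = D_T^{-1/2}U_Tᵀ G U_S D_S^{-1/2}` the whitened gradient with ordered
singular values `s`, for any rank-`r` LoRA parametrization `H = [I ⊗ B₀ | A₀ᵀ ⊗ I]`: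
`‖(JJ† − (JH)(JH)†)z‖₂ = ‖(I − Π_{D_T^{1/2}U_TᵀB₀}) F (I − Π_{D_S^{1/2}U_SᵀA₀ᵀ})‖_F
≥ (Σ_{i≥2r+1} s_i(F)²)^{1/2}`. -/
theorem optimal_alignment_squared_loss {n din dout rs rt r : ℕ}
    (J : Matrix (Fin n) (Fin din × Fin dout) ℝ)
    (S : Matrix (Fin din) (Fin din) ℝ) (T : Matrix (Fin dout) (Fin dout) ℝ)
    (US : Matrix (Fin din) (Fin rs) ℝ) (UT : Matrix (Fin dout) (Fin rt) ℝ)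
    (dS : Fin rs → ℝ) (dT : Fin rt → ℝ)
    (hUS : USᵀ * US = 1) (hUT : UTᵀ * UT = 1)
    (hdS : ∀ i, 0 < dS i) (hdT : ∀ i, 0 < dT i)
    (hS : S = US * diagonal dS * USᵀ) (hT : T = UT * diagonal dT * UTᵀ)
    (hkfac : Jᵀ * J = S ⊗ₖ T)
    (z : Fin n → ℝ)
    (G : Matrix (Fin dout) (Fin din) ℝ)
    (hG : ∀ (i : Fin dout) (j : Fin din), G i j = -(Jᵀ.mulVec z) (j, i))
    (F : Matrix (Fin rt) (Fin rs) ℝ)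
    (hF : F = diagonal (fun i => (Real.sqrt (dT i))⁻¹) * UTᵀ * G
              * US * diagonal (fun i => (Real.sqrt (dS i))⁻¹))
    -- a full SVD of `F` with ordered singular values `s`
    (UF : Matrix (Fin rt) (Fin rt) ℝ) (VF : Matrix (Fin rs) (Fin rs) ℝ)
    (s : ℕ → ℝ)
    (hUF : UFᵀ * UF = 1) (hVF : VFᵀ * VF = 1)
    (hs_anti : ∀ i j, i ≤ j → s j ≤ s i) (hs_nonneg : ∀ i, 0 ≤ s i)
    (hFsvd : F = UF * (Matrix.of fun (i : Fin rt) (j : Fin rs) =>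
                  if (i : ℕ) = (j : ℕ) then s i else 0) * VFᵀ)
    (A₀ : Matrix (Fin r) (Fin din) ℝ) (B₀ : Matrix (Fin dout) (Fin r) ℝ)
    (H : Matrix (Fin din × Fin dout) ((Fin din × Fin r) ⊕ (Fin r × Fin dout)) ℝ)
    (hH : H = fromCols ((1 : Matrix (Fin din) (Fin din) ℝ) ⊗ₖ B₀)
                (A₀ᵀ ⊗ₖ (1 : Matrix (Fin dout) (Fin dout) ℝ)))
    (Jp : Matrix (Fin din × Fin dout) (Fin n) ℝ) (hJp : IsMPInv J Jp)
    (JHp : Matrix ((Fin din × Fin r) ⊕ (Fin r × Fin dout)) (Fin n) ℝ)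
    (hJHp : IsMPInv (J * H) JHp)
    (PAp : Matrix (Fin r) (Fin rs) ℝ)
    (hPAp : IsMPInv (diagonal (fun i => Real.sqrt (dS i)) * USᵀ * A₀ᵀ) PAp)
    (PBp : Matrix (Fin r) (Fin rt) ℝ)
    (hPBp : IsMPInv (diagonal (fun i => Real.sqrt (dT i)) * UTᵀ * B₀) PBp) :
    _root_.enorm ((J * Jp - (J * H) * JHp).mulVec z)
      = frobNorm
          ((1 - (diagonal (fun i => Real.sqrt (dT i)) * UTᵀ * B₀) * PBp) * F
            * (1 - (diagonal (fun i => Real.sqrt (dS i)) * USᵀ * A₀ᵀ) * PAp)) ∧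
    Real.sqrt (∑ i ∈ Finset.Ico (2 * r) (min rt rs), s i ^ 2)
      ≤ frobNorm
          ((1 - (diagonal (fun i => Real.sqrt (dT i)) * UTᵀ * B₀) * PBp) * F
            * (1 - (diagonal (fun i => Real.sqrt (dS i)) * USᵀ * A₀ᵀ) * PAp)) := by
  classical
  set DT2 : Matrix (Fin rt) (Fin rt) ℝ := diagonal (fun i => Real.sqrt (dT i)) with hDT2
  set DS2 : Matrix (Fin rs) (Fin rs) ℝ := diagonal (fun i => Real.sqrt (dS i)) with hDS2
  set DT2i : Matrix (Fin rt) (Fin rt) ℝ := diagonal (fun i => (Real.sqrt (dT i))⁻¹) with hDT2id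
  set DS2i : Matrix (Fin rs) (Fin rs) ℝ := diagonal (fun i => (Real.sqrt (dS i))⁻¹) with hDS2id
  set PB : Matrix (Fin rt) (Fin r) ℝ := DT2 * UTᵀ * B₀ with hPBdef
  set PA : Matrix (Fin rs) (Fin r) ℝ := DS2 * USᵀ * A₀ᵀ with hPAdef
  -- scalar diagonal facts
  have hneT : ∀ i, Real.sqrt (dT i) ≠ 0 := fun i => ne_of_gt (Real.sqrt_pos.mpr (hdT i))
  have hneS : ∀ i, Real.sqrt (dS i) ≠ 0 := fun i => ne_of_gt (Real.sqrt_pos.mpr (hdS i))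
  have hsqT : ∀ i, Real.sqrt (dT i) * Real.sqrt (dT i) = dT i :=
    fun i => Real.mul_self_sqrt (hdT i).le
  have hsqS : ∀ i, Real.sqrt (dS i) * Real.sqrt (dS i) = dS i :=
    fun i => Real.mul_self_sqrt (hdS i).le
  have hDT21 : DT2i * DT2 = 1 := by
    rw [hDT2id, hDT2, Matrix.diagonal_mul_diagonal, ← Matrix.diagonal_one]
    exact congrArg Matrix.diagonal (funext fun i => inv_mul_cancel₀ (hneT i))
  have hDT12 : DT2 * DT2i = 1 := by
    rw [hDT2id, hDT2, Matrix.diagonal_mul_diagonal, ← Matrix.diagonal_one]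
    exact congrArg Matrix.diagonal (funext fun i => mul_inv_cancel₀ (hneT i))
  have hDS21 : DS2i * DS2 = 1 := by
    rw [hDS2id, hDS2, Matrix.diagonal_mul_diagonal, ← Matrix.diagonal_one]
    exact congrArg Matrix.diagonal (funext fun i => inv_mul_cancel₀ (hneS i))
  have hDS12 : DS2 * DS2i = 1 := by
    rw [hDS2id, hDS2, Matrix.diagonal_mul_diagonal, ← Matrix.diagonal_one]
    exact congrArg Matrix.diagonal (funext fun i => mul_inv_cancel₀ (hneS i))
  have hDT2sq : DT2 * DT2 = diagonal dT := by
    rw [hDT2, Matrix.diagonal_mul_diagonal]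
    exact congrArg Matrix.diagonal (funext fun i => hsqT i)
  have hDS2sq : DS2 * DS2 = diagonal dS := by
    rw [hDS2, Matrix.diagonal_mul_diagonal]
    exact congrArg Matrix.diagonal (funext fun i => hsqS i)
  have hDT2idT : DT2i * diagonal dT = DT2 := by
    rw [hDT2id, hDT2, Matrix.diagonal_mul_diagonal]
    refine congrArg Matrix.diagonal (funext fun i => ?_)
    field_simp
    rw [div_eq_iff (hneT i), hsqT i]
  have hDS2idS : DS2i * diagonal dS = DS2 := by
    rw [hDS2id, hDS2, Matrix.diagonal_mul_diagonal]
    refine congrArg Matrix.diagonal (funext fun i => ?_)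
    field_simp
    rw [div_eq_iff (hneS i), hsqS i]
  have hdTDT2i : diagonal dT * DT2i = DT2 := by
    rw [hDT2id, hDT2, Matrix.diagonal_mul_diagonal]
    refine congrArg Matrix.diagonal (funext fun i => ?_)
    field_simp
    rw [div_eq_iff (hneT i), hsqT i]
  have hDT2T : DT2ᵀ = DT2 := by rw [hDT2, Matrix.diagonal_transpose]
  have hDS2T : DS2ᵀ = DS2 := by rw [hDS2, Matrix.diagonal_transpose]
  have hDT2iT : DT2iᵀ = DT2i := by rw [hDT2id, Matrix.diagonal_transpose]
  have hDS2iT : DS2iᵀ = DS2i := by rw [hDS2id, Matrix.diagonal_transpose]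
  -- projection algebra for J, J*H
  have hPi1 : (J*Jp)*(J*Jp) = J*Jp := by rw [← Matrix.mul_assoc, hJp.1]
  have hPi2 : ((J*H)*JHp)*((J*H)*JHp) = (J*H)*JHp := by rw [← Matrix.mul_assoc, hJHp.1]
  have hcross1 : (J*Jp)*((J*H)*JHp) = (J*H)*JHp := by
    rw [← Matrix.mul_assoc]
    congr 1
    rw [← Matrix.mul_assoc, hJp.1]
  have hcross2 : ((J*H)*JHp)*(J*Jp) = (J*H)*JHp := by
    have h0 := congrArg Matrix.transpose hcross1
    rw [Matrix.transpose_mul, hJp.2.2.1, hJHp.2.2.1] at h0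
    exact h0
  have hDD : (J*Jp - (J*H)*JHp)ᵀ*(J*Jp - (J*H)*JHp) = J*Jp - (J*H)*JHp := by
    rw [Matrix.transpose_sub, hJp.2.2.1, hJHp.2.2.1, Matrix.sub_mul, Matrix.mul_sub,
      Matrix.mul_sub, hPi1, hPi2, hcross1, hcross2]
    abel
  have hsn : ((J*Jp - (J*H)*JHp) *ᵥ z) ⬝ᵥ ((J*Jp - (J*H)*JHp) *ᵥ z)
      = z ⬝ᵥ ((J*Jp) *ᵥ z) - z ⬝ᵥ (((J*H)*JHp) *ᵥ z) := by
    rw [dd _ _ z z, hDD, Matrix.sub_mulVec, dotProduct_sub]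
  -- vec facts for G
  have hGv : Jᵀ *ᵥ z = vec' (-G) := by
    funext p
    obtain ⟨j, i⟩ := p
    simp [vec', hG i j]
  have hzJ : ∀ (u : Fin din × Fin dout → ℝ), z ⬝ᵥ (J *ᵥ u) = vec' (-G) ⬝ᵥ u := by
    intro u
    rw [Matrix.dotProduct_mulVec, ← Matrix.mulVec_transpose, hGv]
  set Ymat : Matrix (Fin dout) (Fin din) ℝ := Matrix.of (fun i j => (Jp *ᵥ z) (j, i)) with hYmat
  have hYvec : Jp *ᵥ z = vec' Ymat := by
    funext p; obtain ⟨j,i⟩ := p; simp [vec', hYmat]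
  have hGexp : G = -(T*Ymat*Sᵀ) := by
    have h1 : Jᵀ*(J*Jp) = Jᵀ := by
      have h0 := congrArg Matrix.transpose hJp.1
      rw [Matrix.transpose_mul, hJp.2.2.1] at h0
      exact h0
    have h2 : Jᵀ *ᵥ z = vec' (T*Ymat*Sᵀ) := by
      rw [← bridge_kron, ← hYvec, Matrix.mulVec_mulVec, ← hkfac, Matrix.mul_assoc, h1]
    have h3 : vec' (-G) = vec' (T*Ymat*Sᵀ) := by rw [← hGv, h2]
    have h4 := vec'_inj h3
    rw [← h4, neg_neg]
  -- LoRA parametrization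
  set Amat : (((Fin din × Fin r) ⊕ (Fin r × Fin dout)) → ℝ) → Matrix (Fin r) (Fin din) ℝ :=
    fun x => Matrix.of (fun k j => x (Sum.inl (j, k))) with hAmat
  set Bmat : (((Fin din × Fin r) ⊕ (Fin r × Fin dout)) → ℝ) → Matrix (Fin dout) (Fin r) ℝ :=
    fun x => Matrix.of (fun i k => x (Sum.inr (k, i))) with hBmat
  set Wm : (((Fin din × Fin r) ⊕ (Fin r × Fin dout)) → ℝ) → Matrix (Fin dout) (Fin din) ℝ :=
    fun x => B₀ * (Amat x) + (Bmat x) * A₀ with hWm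
  have hHx : ∀ x, H *ᵥ x = vec' (Wm x) := by
    intro x
    have hx : x = Sum.elim (fun a => x (Sum.inl a)) (fun b => x (Sum.inr b)) := by
      funext p; cases p <;> rfl
    rw [hH]
    conv_lhs => rw [hx]
    rw [Matrix.fromCols_mulVec_sumElim]
    have e1 : (fun a => x (Sum.inl a)) = vec' (Amat x) := by
      funext q; obtain ⟨j,k⟩ := q; simp [vec', hAmat]
    have e2 : (fun b => x (Sum.inr b)) = vec' (Bmat x) := by
      funext q; obtain ⟨k,i⟩ := q; simp [vec', hBmat]
    rw [e1, e2, bridge_kron, bridge_kron, vec'_add]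
    rw [hWm]
    simp
  -- trace identities (whitening)
  have htrGW : ∀ (W : Matrix (Fin dout) (Fin din) ℝ),
      (Gᵀ*W).trace = (Fᵀ*(DT2 * (UTᵀ * (W * (US * DS2))))).trace := by
    intro W
    rw [hF, hGexp, hT, hS]
    simp only [Matrix.transpose_neg, Matrix.transpose_mul, hDT2T, hDS2T, hDT2iT, hDS2iT,
      Matrix.diagonal_transpose, Matrix.transpose_transpose, Matrix.neg_mul, Matrix.mul_neg,
      Matrix.trace_neg, Matrix.mul_assoc, collapse1 hUS, collapse1 hUT, collapse1 hDT21,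
      collapse2 hDS2idS]
    rw [neg_inj]
    conv_lhs => rw [Matrix.trace_mul_comm]
    simp only [Matrix.mul_assoc]
    conv_lhs => rw [Matrix.trace_mul_comm]
    simp only [Matrix.mul_assoc]
    conv_lhs => rw [Matrix.trace_mul_comm]
    simp only [Matrix.mul_assoc]
    conv_rhs => rw [Matrix.trace_mul_comm]
    simp only [Matrix.mul_assoc, hDS2sq]
    conv_rhs => rw [Matrix.trace_mul_comm]
    simp only [Matrix.mul_assoc]
  have htrWW : ∀ (W : Matrix (Fin dout) (Fin din) ℝ),
      (Wᵀ*(T*W*Sᵀ)).trace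
        = ((DT2 * (UTᵀ * (W * (US * DS2))))ᵀ*(DT2 * (UTᵀ * (W * (US * DS2))))).trace := by
    intro W
    rw [hT, hS]
    simp only [Matrix.transpose_mul, hDT2T, hDS2T, Matrix.diagonal_transpose,
      Matrix.transpose_transpose, Matrix.mul_assoc, collapse2 hDT2sq]
    conv_rhs => rw [Matrix.trace_mul_comm]
    simp only [Matrix.mul_assoc, hDS2sq]
    conv_rhs => rw [Matrix.trace_mul_comm]
    simp only [Matrix.mul_assoc]
  have hφcore : ∀ (W : Matrix (Fin dout) (Fin din) ℝ),
      (z - J *ᵥ (vec' W)) ⬝ᵥ (z - J *ᵥ (vec' W))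
        = z ⬝ᵥ z - (Fᵀ*F).trace
          + ((F + DT2 * (UTᵀ * (W * (US * DS2))))ᵀ
              *(F + DT2 * (UTᵀ * (W * (US * DS2))))).trace := by
    intro W
    rw [dot_sub_sq]
    have hdotv : z ⬝ᵥ (J *ᵥ vec' W) = -(Gᵀ*W).trace := by
      rw [hzJ, bridge_dot]
      have h : (-G)ᵀ*W = -(Gᵀ*W) := by rw [Matrix.transpose_neg, Matrix.neg_mul]
      rw [h, Matrix.trace_neg]
    have hvv : (J *ᵥ vec' W) ⬝ᵥ (J *ᵥ vec' W) = (Wᵀ*(T*W*Sᵀ)).trace := by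
      rw [dd2 J J, hkfac, bridge_kron, bridge_dot]
    rw [hdotv, hvv, tno_expand, htrGW W, htrWW W]
    ring
  -- value of the full-projection quadratic form
  set matOf : (Fin din × Fin dout → ℝ) → Matrix (Fin dout) (Fin din) ℝ :=
    fun x => Matrix.of (fun i j => x (j, i)) with hmatOf
  have hxvec : ∀ x : Fin din × Fin dout → ℝ, x = vec' (matOf x) := by
    intro x; funext p; obtain ⟨j,i⟩ := p; simp [vec', hmatOf]
  have hmv : ∀ W : Matrix (Fin dout) (Fin din) ℝ, matOf (vec' W) = W := by
    intro W; ext i j; simp [hmatOf, vec']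
  have hq : z ⬝ᵥ ((J*Jp) *ᵥ z) = (Fᵀ*F).trace - 0 := by
    refine proj_value hJp z _ 0
      (fun x => ((F + DT2 * (UTᵀ * ((matOf x) * (US * DS2))))ᵀ
        *(F + DT2 * (UTᵀ * ((matOf x) * (US * DS2))))).trace) ?_ ?_ ?_
    · intro x
      conv_lhs => rw [hxvec x]
      exact hφcore (matOf x)
    · intro x; exact tno_nonneg _
    · refine ⟨vec' (-(UT * (DT2i * (F * (DS2i * USᵀ))))), ?_⟩
      simp only [hmv]
      have hWc : DT2 * (UTᵀ * ((-(UT * (DT2i * (F * (DS2i * USᵀ))))) * (US * DS2))) = -F := by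
        simp only [Matrix.neg_mul, Matrix.mul_neg, Matrix.mul_assoc, collapse1 hUS,
          collapse1 hUT, collapse1 hDT12, collapse1 hDS21, hDS21, Matrix.mul_one]
      rw [hWc]
      simp
  -- the target matrix
  have hPiBs : (PB*PBp)ᵀ = PB*PBp := hPBp.2.2.1
  have hPiAs : (PA*PAp)ᵀ = PA*PAp := hPAp.2.2.1
  have hPBfix : (PB*PBp)*PB = PB := hPBp.1
  have hPAfix : (PA*PAp)*PA = PA := hPAp.1
  have hPAtfix : PAᵀ*(PA*PAp) = PAᵀ := by
    have h0 := congrArg Matrix.transpose hPAfix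
    rw [Matrix.transpose_mul, hPAp.2.2.1] at h0
    exact h0
  have h1B : (1 - PB*PBp)*PB = 0 := by
    rw [Matrix.sub_mul, Matrix.one_mul, hPBfix, sub_self]
  have h1A : PAᵀ*(1 - PA*PAp) = 0 := by
    rw [Matrix.mul_sub, Matrix.mul_one, hPAtfix, sub_self]
  set PiB : Matrix (Fin rt) (Fin rt) ℝ := PB * PBp with hPiB
  set PiA : Matrix (Fin rs) (Fin rs) ℝ := PA * PAp with hPiA
  set Mtx : Matrix (Fin rt) (Fin rs) ℝ := (1 - PiB) * F * (1 - PiA) with hMtx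
  have hMtxT : Mtxᵀ = (1 - PiA)*(Fᵀ*(1 - PiB)) := by
    rw [hMtx]
    simp only [Matrix.transpose_mul, Matrix.transpose_sub, Matrix.transpose_one, hPiAs, hPiBs,
      Matrix.mul_assoc]
  have horthPB : ∀ (Aa : Matrix (Fin r) (Fin rs) ℝ), (Mtxᵀ*(PB*Aa)).trace = 0 := by
    intro Aa
    have h1 : Mtxᵀ*(PB*Aa) = (1 - PiA)*(Fᵀ*(((1 - PiB)*PB)*Aa)) := by
      rw [hMtxT]; simp only [Matrix.mul_assoc]
    rw [h1, h1B]
    simp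
  have horthPA : ∀ (Bb : Matrix (Fin rt) (Fin r) ℝ), (Mtxᵀ*(Bb*PAᵀ)).trace = 0 := by
    intro Bb
    have h1 : Mtxᵀ*(Bb*PAᵀ) = (Mtxᵀ*Bb)*PAᵀ := by rw [Matrix.mul_assoc]
    rw [h1, Matrix.trace_mul_comm]
    have h2 : PAᵀ*(Mtxᵀ*Bb) = ((PAᵀ*(1 - PiA))*(Fᵀ*(1 - PiB)))*Bb := by
      rw [hMtxT]; simp only [Matrix.mul_assoc]
    rw [h2, h1A]
    simp
  -- decomposition of F - Mtx and of Psi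
  have hFMtx : F - Mtx = PB*(PBp*F) + ((1 - PiB)*(F*PApᵀ))*PAᵀ := by
    have hPiAalt : PiA = PApᵀ*PAᵀ := by
      conv_lhs => rw [← hPiAs, hPiA, Matrix.transpose_mul]
    rw [hMtx, hPiAalt, hPiB]
    simp only [Matrix.sub_mul, Matrix.mul_sub, Matrix.one_mul, Matrix.mul_one, Matrix.mul_assoc]
    abel
  have hPsiSplit : ∀ x, DT2 * (UTᵀ * ((Wm x) * (US * DS2)))
      = PB*((Amat x)*(US*DS2)) + (DT2*(UTᵀ*(Bmat x)))*PAᵀ := by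
    intro x
    rw [hWm]
    simp only [hPBdef, hPAdef, Matrix.transpose_mul, hDS2T, Matrix.transpose_transpose,
      Matrix.add_mul, Matrix.mul_add, Matrix.mul_assoc]
  -- hq' via proj_value
  have hq' : z ⬝ᵥ (((J*H)*JHp) *ᵥ z) = (Fᵀ*F).trace - (Mtxᵀ*Mtx).trace := by
    refine proj_value hJHp z _ ((Mtxᵀ*Mtx).trace)
      (fun x => ((F + DT2 * (UTᵀ * ((Wm x) * (US * DS2))))ᵀ
        *(F + DT2 * (UTᵀ * ((Wm x) * (US * DS2))))).trace) ?_ ?_ ?_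
    · intro x
      have hv : (J*H) *ᵥ x = J *ᵥ (vec' (Wm x)) := by
        rw [← Matrix.mulVec_mulVec, hHx x]
      rw [hv]
      exact hφcore (Wm x)
    · intro x
      have hsplit : F + DT2 * (UTᵀ * ((Wm x) * (US * DS2)))
          = Mtx + ((F - Mtx) + DT2 * (UTᵀ * ((Wm x) * (US * DS2)))) := by abel
      have hcomb : (F - Mtx) + DT2 * (UTᵀ * ((Wm x) * (US * DS2)))
          = PB*((PBp*F) + (Amat x)*(US*DS2))
            + (((1 - PiB)*(F*PApᵀ)) + DT2*(UTᵀ*(Bmat x)))*PAᵀ := by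
        rw [hFMtx, hPsiSplit x]
        simp only [Matrix.mul_add, Matrix.add_mul]
        abel
      have hz0 : (Mtxᵀ*((F - Mtx) + DT2 * (UTᵀ * ((Wm x) * (US * DS2))))).trace = 0 := by
        rw [hcomb, Matrix.mul_add, Matrix.trace_add, horthPB, horthPA, add_zero]
      calc (Mtxᵀ*Mtx).trace
          ≤ ((Mtx + ((F - Mtx) + DT2 * (UTᵀ * ((Wm x) * (US * DS2)))))ᵀ
            *(Mtx + ((F - Mtx) + DT2 * (UTᵀ * ((Wm x) * (US * DS2)))))).trace :=
            tno_ge_left _ _ hz0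
        _ = _ := by rw [← hsplit]
    · -- existence of optimal LoRA update
      set Astar : Matrix (Fin r) (Fin din) ℝ := (-(PBp*F))*(DS2i*USᵀ) with hAstar
      set Bstar : Matrix (Fin dout) (Fin r) ℝ := (UT*DT2i)*(-((1 - PiB)*(F*PApᵀ))) with hBstar
      refine ⟨Sum.elim (fun p : Fin din × Fin r => Astar p.2 p.1)
        (fun p : Fin r × Fin dout => Bstar p.2 p.1), ?_⟩
      have hAm : Amat (Sum.elim (fun p : Fin din × Fin r => Astar p.2 p.1)
          (fun p : Fin r × Fin dout => Bstar p.2 p.1)) = Astar := by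
        ext k j; simp [hAmat]
      have hBm : Bmat (Sum.elim (fun p : Fin din × Fin r => Astar p.2 p.1)
          (fun p : Fin r × Fin dout => Bstar p.2 p.1)) = Bstar := by
        ext i k; simp [hBmat]
      have hPsixh : DT2 * (UTᵀ * ((Wm (Sum.elim (fun p : Fin din × Fin r => Astar p.2 p.1)
          (fun p : Fin r × Fin dout => Bstar p.2 p.1))) * (US * DS2))) = Mtx - F := by
        simp only [hWm]
        rw [hAm, hBm, hAstar, hBstar, ← neg_sub F Mtx, hFMtx, hPBdef, hPAdef]
        simp only [Matrix.transpose_mul, hDS2T, Matrix.transpose_transpose, Matrix.neg_mul,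
          Matrix.mul_neg, neg_add, Matrix.add_mul, Matrix.mul_add, Matrix.mul_assoc,
          collapse1 hUS, collapse1 hUT, collapse1 hDT12, hDS21, Matrix.mul_one]
      simp only [hPsixh]
      have hc : F + (Mtx - F) = Mtx := by abel
      rw [hc]
  -- combine part 1
  have key : ((J*Jp - (J*H)*JHp) *ᵥ z) ⬝ᵥ ((J*Jp - (J*H)*JHp) *ᵥ z) = (Mtxᵀ*Mtx).trace := by
    rw [hsn, hq, hq']; ring
  -- part 2: tail bound
  have hUFo : UF * UFᵀ = 1 := mul_eq_one_comm.mp hUF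
  have hVFo : VF * VFᵀ = 1 := mul_eq_one_comm.mp hVF
  set S0 : Matrix (Fin rt) (Fin rs) ℝ :=
    Matrix.of (fun (i : Fin rt) (j : Fin rs) => if (i:ℕ) = (j:ℕ) then s i else 0) with hS0m
  set Pp : Matrix (Fin rt) (Fin rt) ℝ := UFᵀ*((1 - PiB)*UF) with hPp
  set Qp : Matrix (Fin rs) (Fin rs) ℝ := VFᵀ*((1 - PiA)*VF) with hQp
  set Nn : Matrix (Fin rt) (Fin rs) ℝ := Pp*(S0*Qp) with hNn
  have hNMtx : Nn = UFᵀ*(Mtx*VF) := by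
    rw [hNn, hPp, hQp, hMtx, hFsvd]
    simp only [Matrix.mul_assoc]
  have hMN : (Mtxᵀ*Mtx).trace = (Nnᵀ*Nn).trace := by
    rw [hNMtx]
    exact (tno_conj UF VF Mtx hUFo hVFo).symm
  have hrk : (S0 - Nn).rank ≤ 2*r := by
    have hXfact : S0 - Nn = Matrix.fromCols (UFᵀ*PB) (Pp*(S0*(VFᵀ*PA)))
        * Matrix.fromRows (PBp*(UF*S0)) (PAp*VF) := by
      rw [Matrix.fromCols_mul_fromRows, hNn, hQp, hPp]
      simp only [hPiB, hPiA, Matrix.sub_mul, Matrix.mul_sub, Matrix.one_mul, Matrix.mul_one,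
        Matrix.mul_assoc, collapse1 hUF, hVF, collapse1 hVF]
      abel
    rw [hXfact]
    calc (Matrix.fromCols (UFᵀ*PB) (Pp*(S0*(VFᵀ*PA)))
          * Matrix.fromRows (PBp*(UF*S0)) (PAp*VF)).rank
        ≤ (Matrix.fromCols (UFᵀ*PB) (Pp*(S0*(VFᵀ*PA)))).rank :=
          Matrix.rank_mul_le_left _ _
      _ ≤ Fintype.card ((Fin r) ⊕ (Fin r)) := Matrix.rank_le_card_width _
      _ = 2*r := by simp [Fintype.card_sum]; omega
  have key2 : ∑ k ∈ Finset.Ico (2*r) (min rt rs), s k ^2 ≤ (Mtxᵀ*Mtx).trace := by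
    rw [hMN]
    exact low_rank_tail s hs_anti hs_nonneg Nn hrk
  constructor
  · rw [enorm_eq_dot, frobNorm_eq_trace]
    congr 1
  · rw [frobNorm_eq_trace]
    exact Real.sqrt_le_sqrt key2
end

section
/- Let F ∈ ℝ^{m×n}, and let P ∈ ℝ^{m×m} and Q ∈ ℝ^{n×n} be orthogonal projection matrices (symmetric idempotents) with rank(P) ≤ r and rank(Q) ≤ r. Then ‖(I_m − P) F (I_n − Q)‖_F ≥ ( Σ_{i ≥ 2r+1} s_i(F)² )^{1/2}, where s_1(F) ≥ s_2(F) ≥ … are the singular values of F. -/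
open Matrix

section DPTBaux

open Finset



noncomputable def DPTBfsq {ι κ : Type*} [Fintype ι] [Fintype κ] (A : Matrix ι κ ℝ) : ℝ :=
  ∑ i, ∑ j, A i j ^ 2

lemma DPTBfsq_nonneg {ι κ : Type*} [Fintype ι] [Fintype κ] (A : Matrix ι κ ℝ) : 0 ≤ DPTBfsq A :=
  Finset.sum_nonneg fun _ _ => Finset.sum_nonneg fun _ _ => sq_nonneg _

lemma DPTBfsq_eq_trace {ι κ : Type*} [Fintype ι] [Fintype κ] (A : Matrix ι κ ℝ) :
    DPTBfsq A = Matrix.trace (Aᵀ * A) := by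
  simp only [DPTBfsq, Matrix.trace, Matrix.diag, Matrix.mul_apply, Matrix.transpose_apply]
  rw [Finset.sum_comm]
  congr 1; ext i; congr 1; ext j; ring

lemma DPTBfsq_mul_orth_left {ι κ : Type*} [Fintype ι] [Fintype κ] [DecidableEq ι]
    (U : Matrix ι ι ℝ) (X : Matrix ι κ ℝ) (hU : Uᵀ * U = 1) :
    DPTBfsq (U * X) = DPTBfsq X := by
  rw [DPTBfsq_eq_trace, DPTBfsq_eq_trace, Matrix.transpose_mul]
  rw [show Xᵀ * Uᵀ * (U * X) = Xᵀ * (Uᵀ * U) * X by simp [Matrix.mul_assoc], hU, Matrix.mul_one]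

lemma DPTBfsq_mul_orth_right {ι κ : Type*} [Fintype ι] [Fintype κ] [DecidableEq κ]
    (X : Matrix ι κ ℝ) (V : Matrix κ κ ℝ) (hV : Vᵀ * V = 1) :
    DPTBfsq (X * Vᵀ) = DPTBfsq X := by
  rw [DPTBfsq_eq_trace, DPTBfsq_eq_trace, Matrix.transpose_mul, Matrix.transpose_transpose]
  rw [show V * Xᵀ * (X * Vᵀ) = (V * (Xᵀ * X)) * Vᵀ by simp [Matrix.mul_assoc]]
  rw [Matrix.trace_mul_comm, ← Matrix.mul_assoc, hV, Matrix.one_mul]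

lemma DPTBfsq_mul_proj_le {ι κ : Type*} [Fintype ι] [Fintype κ] [DecidableEq κ]
    (M : Matrix ι κ ℝ) (R : Matrix κ κ ℝ) (hsym : Rᵀ = R) (hid : R * R = R) :
    DPTBfsq (M * R) ≤ DPTBfsq M := by
  have h1 : DPTBfsq (M * R) = Matrix.trace (Mᵀ * M * R) := by
    rw [DPTBfsq_eq_trace, Matrix.transpose_mul, hsym]
    rw [show R * Mᵀ * (M * R) = (R * (Mᵀ * M)) * R by simp [Matrix.mul_assoc]]
    rw [Matrix.trace_mul_comm, ← Matrix.mul_assoc, hid, Matrix.trace_mul_comm]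
  have h2 : DPTBfsq (M - M * R) = Matrix.trace (Mᵀ * M) - Matrix.trace (Mᵀ * M * R) := by
    rw [DPTBfsq_eq_trace]
    have : (M - M * R)ᵀ * (M - M * R)
        = Mᵀ * M - Mᵀ * M * R - (R * (Mᵀ * M) - (R * (Mᵀ * M)) * R) := by
      rw [Matrix.transpose_sub, Matrix.transpose_mul, hsym]
      rw [Matrix.sub_mul, Matrix.mul_sub, Matrix.mul_sub]
      simp [Matrix.mul_assoc]
    rw [this]
    rw [Matrix.trace_sub, Matrix.trace_sub, Matrix.trace_sub]
    have e1 : Matrix.trace (R * (Mᵀ * M)) = Matrix.trace (Mᵀ * M * R) := by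
      rw [Matrix.trace_mul_comm]
    have e2 : Matrix.trace (R * (Mᵀ * M) * R) = Matrix.trace (Mᵀ * M * R) := by
      rw [Matrix.trace_mul_comm, ← Matrix.mul_assoc, hid, Matrix.trace_mul_comm]
    rw [e1, e2]; ring
  have h3 := DPTBfsq_nonneg (M - M * R)
  have h4 : DPTBfsq M = Matrix.trace (Mᵀ * M) := DPTBfsq_eq_trace M
  linarith [h2, h3]

lemma DPTB_key_sum (ν c : ℕ) (t ρ : ℕ → ℝ) (ht0 : ∀ k, 0 ≤ t k)
    (hta : ∀ i j : ℕ, i ≤ j → t j ≤ t i)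
    (hρ0 : ∀ k, 0 ≤ ρ k) (hρ1 : ∀ k, ρ k ≤ 1) (n : ℕ) (hν : ν ≤ n)
    (hsum : (n : ℝ) ≤ (∑ k ∈ Finset.range n, ρ k) + c) :
    ∑ k ∈ Finset.Ico c ν, t k ≤ ∑ k ∈ Finset.range ν, t k * ρ k := by
  rcases le_or_gt ν c with h | h
  · rw [Finset.Ico_eq_empty (by omega)]
    simpa using Finset.sum_nonneg fun k _ => mul_nonneg (ht0 k) (hρ0 k)
  · set w : ℕ → ℝ := fun k => 1 - ρ k with hw
    have hw0 : ∀ k, 0 ≤ w k := fun k => by simp [hw]; linarith [hρ1 k]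
    have hw1 : ∀ k, w k ≤ 1 := fun k => by simp [hw]; linarith [hρ0 k]
    have hwn : ∑ k ∈ Finset.range n, w k ≤ c := by
      have : ∑ k ∈ Finset.range n, w k = n - ∑ k ∈ Finset.range n, ρ k := by
        simp [hw, Finset.sum_sub_distrib]
      rw [this]; linarith
    have hsplitn : ∑ k ∈ Finset.range c, w k + ∑ k ∈ Finset.Ico c n, w k
        = ∑ k ∈ Finset.range n, w k := by
      rw [Finset.range_eq_Ico, Finset.range_eq_Ico]
      exact Finset.sum_Ico_consecutive _ (Nat.zero_le c) (by omega)
    have hIcosub : ∑ k ∈ Finset.Ico c ν, w k ≤ ∑ k ∈ Finset.Ico c n, w k := by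
      apply Finset.sum_le_sum_of_subset_of_nonneg
      · exact Finset.Ico_subset_Ico le_rfl hν
      · exact fun k _ _ => hw0 k
    -- main bound : ∑_{range ν} t*w ≤ ∑_{range c} t
    have hmain : ∑ k ∈ Finset.range ν, t k * w k ≤ ∑ k ∈ Finset.range c, t k := by
      have hsplit : ∑ k ∈ Finset.range ν, t k * w k
          = ∑ k ∈ Finset.range c, t k * w k + ∑ k ∈ Finset.Ico c ν, t k * w k := by
        rw [Finset.range_eq_Ico, Finset.range_eq_Ico]
        exact (Finset.sum_Ico_consecutive _ (Nat.zero_le c) (by omega)).symm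
      have hb1 : ∑ k ∈ Finset.Ico c ν, t k * w k ≤ t c * ∑ k ∈ Finset.Ico c ν, w k := by
        rw [Finset.mul_sum]
        apply Finset.sum_le_sum
        intro k hk
        have hck : c ≤ k := (Finset.mem_Ico.mp hk).1
        exact mul_le_mul_of_nonneg_right (hta c k hck) (hw0 k)
      have hb2 : ∑ k ∈ Finset.Ico c ν, w k ≤ ∑ k ∈ Finset.range c, (1 - w k) := by
        have : ∑ k ∈ Finset.range c, (1 - w k) = c - ∑ k ∈ Finset.range c, w k := by
          simp [Finset.sum_sub_distrib]
        rw [this]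
        linarith [hIcosub, hsplitn, hwn]
      have hb3 : t c * ∑ k ∈ Finset.Ico c ν, w k ≤ t c * ∑ k ∈ Finset.range c, (1 - w k) :=
        mul_le_mul_of_nonneg_left hb2 (ht0 c)
      have hb4 : t c * ∑ k ∈ Finset.range c, (1 - w k) ≤ ∑ k ∈ Finset.range c, t k * (1 - w k) := by
        rw [Finset.mul_sum]
        apply Finset.sum_le_sum
        intro k hk
        have hkc : k ≤ c := le_of_lt (Finset.mem_range.mp hk)
        have h1w : 0 ≤ 1 - w k := by linarith [hw1 k]
        exact mul_le_mul_of_nonneg_right (hta k c hkc) h1w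
      have : ∑ k ∈ Finset.range c, t k * w k + ∑ k ∈ Finset.range c, t k * (1 - w k)
          = ∑ k ∈ Finset.range c, t k := by
        rw [← Finset.sum_add_distrib]; congr 1; ext k; ring
      linarith
    have hfin : ∑ k ∈ Finset.range ν, t k * ρ k
        = ∑ k ∈ Finset.range ν, t k - ∑ k ∈ Finset.range ν, t k * w k := by
      rw [← Finset.sum_sub_distrib]; congr 1; ext k; simp [hw]; ring
    have hico : ∑ k ∈ Finset.Ico c ν, t k = ∑ k ∈ Finset.range ν, t k - ∑ k ∈ Finset.range c, t k := by
      rw [Finset.range_eq_Ico, Finset.range_eq_Ico]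
      rw [← Finset.sum_Ico_consecutive _ (Nat.zero_le c) (le_of_lt h)]
      ring
    linarith




lemma DPTB_diag_bounds {n : ℕ} (R : Matrix (Fin n) (Fin n) ℝ)
    (hsym : Rᵀ = R) (hid : R * R = R) (k : Fin n) : 0 ≤ R k k ∧ R k k ≤ 1 := by
  have hdiag : R k k = ∑ l, R k l * R l k := by
    conv_lhs => rw [← hid]
    simp [Matrix.mul_apply]
  have hsq : ∀ l, R k l * R l k = (R k l) ^ 2 := by
    intro l
    have : R l k = R k l := by
      conv_lhs => rw [← hsym]
      rfl
    rw [this]; ring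
  have h0 : 0 ≤ R k k := by
    rw [hdiag]
    apply Finset.sum_nonneg
    intro l _
    rw [hsq l]; positivity
  have h2 : (R k k) ^ 2 ≤ R k k := by
    conv_rhs => rw [hdiag]
    have := Finset.single_le_sum (f := fun l => R k l * R l k)
      (fun l _ => by simpa [hsq l] using sq_nonneg (R k l)) (Finset.mem_univ k)
    calc (R k k) ^ 2 = R k k * R k k := by ring
    _ ≤ ∑ l, R k l * R l k := this
  constructor
  · exact h0
  · nlinarith

lemma DPTB_exists_proj {n m' : ℕ} (A : Matrix (Fin n) (Fin n) ℝ) (B : Matrix (Fin m') (Fin n) ℝ) :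
    ∃ R : Matrix (Fin n) (Fin n) ℝ, Rᵀ = R ∧ R * R = R ∧ A * R = 0 ∧ B * R = 0 ∧
      (n : ℝ) ≤ (∑ k, R k k) + (A.rank + B.rank : ℕ) := by
  classical
  set K0 : Submodule ℝ (Fin n → ℝ) :=
    LinearMap.ker A.mulVecLin ⊓ LinearMap.ker B.mulVecLin with hK0
  set e : EuclideanSpace ℝ (Fin n) ≃ₗ[ℝ] (Fin n → ℝ) := WithLp.linearEquiv 2 ℝ (Fin n → ℝ) with he
  set K : Submodule ℝ (EuclideanSpace ℝ (Fin n)) := K0.comap e.toLinearMap with hK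
  have hfinrankK : Module.finrank ℝ K = Module.finrank ℝ K0 := by
    rw [hK, Submodule.comap_equiv_eq_map_symm]
    exact LinearEquiv.finrank_map_eq e.symm K0
  -- dimension bound
  have hdim : n ≤ Module.finrank ℝ K0 + (A.rank + B.rank) := by
    have h1 : A.rank + Module.finrank ℝ (LinearMap.ker A.mulVecLin) = n := by
      have := LinearMap.finrank_range_add_finrank_ker A.mulVecLin
      rwa [Module.finrank_pi, Fintype.card_fin] at this
    have h2 : B.rank + Module.finrank ℝ (LinearMap.ker B.mulVecLin) = n := by
      have := LinearMap.finrank_range_add_finrank_ker B.mulVecLin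
      rwa [Module.finrank_pi, Fintype.card_fin] at this
    have h3 := Submodule.finrank_sup_add_finrank_inf_eq
      (LinearMap.ker A.mulVecLin) (LinearMap.ker B.mulVecLin)
    have h4 : Module.finrank ℝ (LinearMap.ker A.mulVecLin ⊔ LinearMap.ker B.mulVecLin : Submodule ℝ (Fin n → ℝ)) ≤ n := by
      have := Submodule.finrank_le (LinearMap.ker A.mulVecLin ⊔ LinearMap.ker B.mulVecLin : Submodule ℝ (Fin n → ℝ))
      rwa [Module.finrank_pi, Fintype.card_fin] at this
    rw [hK0]
    omega
  set d := Module.finrank ℝ K with hd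
  set b := stdOrthonormalBasis ℝ K with hb
  set v : Fin d → (Fin n → ℝ) := fun i => e ((b i : EuclideanSpace ℝ (Fin n))) with hv
  have hv_mem : ∀ i, v i ∈ K0 := fun i => (b i).2
  have hON : ∀ i j, (∑ k, v i k * v j k) = if i = j then (1:ℝ) else 0 := by
    intro i j
    have h := orthonormal_iff_ite.mp b.orthonormal i j
    rw [Submodule.coe_inner] at h
    rw [PiLp.inner_apply] at h
    simp only [RCLike.inner_apply, conj_trivial] at h
    rw [← h]
    exact Finset.sum_congr rfl fun x _ => mul_comm _ _
  set W : Matrix (Fin n) (Fin d) ℝ := Matrix.of fun k i => v i k with hW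
  have hWtW : Wᵀ * W = 1 := by
    ext i j
    simp only [Matrix.mul_apply, Matrix.transpose_apply, hW, Matrix.of_apply, Matrix.one_apply]
    exact hON i j
  refine ⟨W * Wᵀ, ?_, ?_, ?_, ?_, ?_⟩
  · simp [Matrix.transpose_mul]
  · rw [Matrix.mul_assoc, ← Matrix.mul_assoc Wᵀ, hWtW, Matrix.one_mul]
  · have hAW : A * W = 0 := by
      ext k i
      have hm := (hv_mem i).1
      have : A.mulVec (v i) = 0 := hm
      have hcol : (A * W) k i = A.mulVec (v i) k := by
        simp [Matrix.mul_apply, Matrix.mulVec, hW, dotProduct]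
      rw [hcol, this]; rfl
    rw [← Matrix.mul_assoc, hAW, Matrix.zero_mul]
  · have hBW : B * W = 0 := by
      ext k i
      have hm := (hv_mem i).2
      have : B.mulVec (v i) = 0 := hm
      have hcol : (B * W) k i = B.mulVec (v i) k := by
        simp [Matrix.mul_apply, Matrix.mulVec, hW, dotProduct]
      rw [hcol, this]; rfl
    rw [← Matrix.mul_assoc, hBW, Matrix.zero_mul]
  · have htr : ∑ k, (W * Wᵀ) k k = (d : ℝ) := by
      have : Matrix.trace (W * Wᵀ) = Matrix.trace (Wᵀ * W) := Matrix.trace_mul_comm W Wᵀ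
      rw [hWtW] at this
      simpa [Matrix.trace, Matrix.diag] using this
    rw [htr]
    have : n ≤ d + (A.rank + B.rank) := by rw [hfinrankK]; exact hdim
    exact_mod_cast this


theorem DPTB_main {m n r : ℕ}
    (F : Matrix (Fin m) (Fin n) ℝ)
    (P : Matrix (Fin m) (Fin m) ℝ) (Q : Matrix (Fin n) (Fin n) ℝ)
    (hPsymm : Pᵀ = P) (hPidem : P * P = P) (hPrank : P.rank ≤ r)
    (hQsymm : Qᵀ = Q) (hQidem : Q * Q = Q) (hQrank : Q.rank ≤ r)
    (UF : Matrix (Fin m) (Fin m) ℝ) (VF : Matrix (Fin n) (Fin n) ℝ)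
    (s : ℕ → ℝ)
    (hUF : UFᵀ * UF = 1) (hVF : VFᵀ * VF = 1)
    (hs_anti : ∀ i j, i ≤ j → s j ≤ s i) (hs_nonneg : ∀ i, 0 ≤ s i)
    (hFsvd : F = UF * (Matrix.of fun (i : Fin m) (j : Fin n) =>
                  if (i : ℕ) = (j : ℕ) then s i else 0) * VFᵀ) :
    (∑ i ∈ Finset.Ico (2 * r) (min m n), s i ^ 2) ≤ DPTBfsq ((1 - P) * F * (1 - Q)) := by
  classical
  set D : Matrix (Fin m) (Fin n) ℝ :=
    Matrix.of (fun (i : Fin m) (j : Fin n) => if (i : ℕ) = (j : ℕ) then s i else 0) with hD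
  have hUU : UF * UFᵀ = 1 := mul_eq_one_comm.mp hUF
  have hVV : VF * VFᵀ = 1 := mul_eq_one_comm.mp hVF
  set P' : Matrix (Fin m) (Fin m) ℝ := UFᵀ * P * UF with hP'
  set Q' : Matrix (Fin n) (Fin n) ℝ := VFᵀ * Q * VF with hQ'
  have h1 : UF * (1 - P') = (1 - P) * UF := by
    rw [Matrix.mul_sub, Matrix.sub_mul, Matrix.mul_one, Matrix.one_mul, hP']
    congr 1
    rw [show UF * (UFᵀ * P * UF) = (UF * UFᵀ) * (P * UF) by simp [Matrix.mul_assoc],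
      hUU, Matrix.one_mul]
  have h2 : (1 - Q') * VFᵀ = VFᵀ * (1 - Q) := by
    rw [Matrix.mul_sub, Matrix.sub_mul, Matrix.mul_one, Matrix.one_mul, hQ']
    congr 1
    rw [show VFᵀ * Q * VF * VFᵀ = (VFᵀ * Q) * (VF * VFᵀ) by simp [Matrix.mul_assoc],
      hVV, Matrix.mul_one]
  have hGeq : (1 - P) * F * (1 - Q) = UF * ((1 - P') * D * (1 - Q')) * VFᵀ := by
    rw [hFsvd]
    calc (1 - P) * (UF * D * VFᵀ) * (1 - Q)
        = ((1 - P) * UF) * D * (VFᵀ * (1 - Q)) := by simp [Matrix.mul_assoc]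
      _ = (UF * (1 - P')) * D * ((1 - Q') * VFᵀ) := by rw [h1, h2]
      _ = UF * ((1 - P') * D * (1 - Q')) * VFᵀ := by simp [Matrix.mul_assoc]
  set M : Matrix (Fin m) (Fin n) ℝ := (1 - P') * D * (1 - Q') with hM
  have hfsqG : DPTBfsq ((1 - P) * F * (1 - Q)) = DPTBfsq M := by
    rw [hGeq, DPTBfsq_mul_orth_right (UF * M) VF hVF, DPTBfsq_mul_orth_left UF M hUF]
  have hrQ' : Q'.rank ≤ r :=
    le_trans (le_trans (Matrix.rank_mul_le_left (VFᵀ * Q) VF)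
      (Matrix.rank_mul_le_right VFᵀ Q)) hQrank
  have hrP' : P'.rank ≤ r :=
    le_trans (le_trans (Matrix.rank_mul_le_left (UFᵀ * P) UF)
      (Matrix.rank_mul_le_right UFᵀ P)) hPrank
  have hrPD : (P' * D).rank ≤ r := le_trans (Matrix.rank_mul_le_left P' D) hrP'
  obtain ⟨R, hRsym, hRidem, hQ'R, hPDR, hRtr⟩ := DPTB_exists_proj Q' (P' * D)
  have hdb := fun k => DPTB_diag_bounds R hRsym hRidem k
  have hMR : M * R = D * R := by
    have e1 : (1 - Q') * R = R := by rw [Matrix.sub_mul, Matrix.one_mul, hQ'R, sub_zero]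
    calc M * R = (1 - P') * D * ((1 - Q') * R) := by rw [hM, Matrix.mul_assoc]
      _ = (1 - P') * D * R := by rw [e1]
      _ = D * R - (P' * D) * R := by
          simp [Matrix.sub_mul]
      _ = D * R := by rw [hPDR, sub_zero]
  have hle1 : DPTBfsq (D * R) ≤ DPTBfsq M := by
    rw [← hMR]; exact DPTBfsq_mul_proj_le M R hRsym hRidem
  have hTent : ∀ k l : Fin n, (Dᵀ * D) k l
      = if k = l ∧ (k : ℕ) < m then s (k : ℕ) ^ 2 else 0 := by
    intro k l
    simp only [Matrix.mul_apply, Matrix.transpose_apply, hD, Matrix.of_apply]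
    by_cases hkm : (k : ℕ) < m
    · by_cases hkl : k = l
      · subst hkl
        rw [Finset.sum_eq_single (⟨(k : ℕ), hkm⟩ : Fin m)]
        · simp [pow_two, hkm]
        · intro i _ hne
          have : ¬ ((i : ℕ) = (k : ℕ)) := fun hc => hne (Fin.ext (by simpa using hc))
          simp [this]
        · intro hc; exact absurd (Finset.mem_univ _) hc
      · have hkl' : ¬ ((k : ℕ) = (l : ℕ)) := fun hc => hkl (Fin.ext hc)
        rw [if_neg (fun hc : k = l ∧ _ => hkl hc.1)]
        apply Finset.sum_eq_zero
        intro i _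
        by_cases hik : (i : ℕ) = (k : ℕ)
        · have : ¬ ((i : ℕ) = (l : ℕ)) := fun hc => hkl' (hik ▸ hc ▸ rfl)
          simp [this]
        · simp [hik]
    · rw [if_neg (fun hc => hkm hc.2)]
      apply Finset.sum_eq_zero
      intro i _
      have : ¬ ((i : ℕ) = (k : ℕ)) := fun hc => hkm (hc ▸ i.isLt)
      simp [this]
  have hDR : DPTBfsq (D * R)
      = ∑ k : Fin n, (if (k : ℕ) < m then s (k : ℕ) ^ 2 else 0) * R k k := by
    have htr : DPTBfsq (D * R) = Matrix.trace ((Dᵀ * D) * R) := by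
      rw [DPTBfsq_eq_trace, Matrix.transpose_mul, hRsym]
      rw [show R * Dᵀ * (D * R) = (R * (Dᵀ * D)) * R by simp [Matrix.mul_assoc]]
      rw [Matrix.trace_mul_comm, ← Matrix.mul_assoc, hRidem, Matrix.trace_mul_comm]
    rw [htr]
    rw [Matrix.trace]
    refine Finset.sum_congr rfl fun k _ => ?_
    rw [Matrix.diag]
    have hmul : (Dᵀ * D * R) k k = ∑ l, (Dᵀ * D) k l * R l k := Matrix.mul_apply
    rw [hmul]
    have hterm : ∀ l : Fin n, (Dᵀ * D) k l * R l k
        = if k = l then (if (k : ℕ) < m then s (k : ℕ) ^ 2 else 0) * R l k else 0 := by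
      intro l
      rw [hTent k l]
      by_cases h1 : k = l <;> by_cases h3 : (k : ℕ) < m <;> simp [h1, h3]
    rw [Finset.sum_congr rfl fun l _ => hterm l]
    simp
  -- now the combinatorial part
  set ν := min m n with hν
  set t : ℕ → ℝ := fun k => s k ^ 2 with ht
  set ρ : ℕ → ℝ := fun k => if h : k < n then R ⟨k, h⟩ ⟨k, h⟩ else 0 with hρ
  have hρ0 : ∀ k, 0 ≤ ρ k := by
    intro k; rw [hρ]; dsimp only
    split
    · exact (hdb _).1
    · exact le_rfl
  have hρ1 : ∀ k, ρ k ≤ 1 := by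
    intro k; rw [hρ]; dsimp only
    split
    · exact (hdb _).2
    · exact zero_le_one
  have hρfin : ∀ i : Fin n, ρ (i : ℕ) = R i i := by
    intro i; rw [hρ]; dsimp only; rw [dif_pos i.isLt]
  have hρsum : (n : ℝ) ≤ (∑ k ∈ Finset.range n, ρ k) + ((2 * r : ℕ) : ℝ) := by
    have hconv : ∑ k ∈ Finset.range n, ρ k = ∑ i : Fin n, R i i := by
      rw [← Fin.sum_univ_eq_sum_range ρ n]
      exact Finset.sum_congr rfl fun i _ => hρfin i
    rw [hconv]
    have hcast : ((Q'.rank + (P' * D).rank : ℕ) : ℝ) ≤ ((2 * r : ℕ) : ℝ) := by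
      exact_mod_cast (by omega : Q'.rank + (P' * D).rank ≤ 2 * r)
    linarith [hRtr]
  have ht0 : ∀ k, 0 ≤ t k := fun k => sq_nonneg _
  have hta : ∀ i j : ℕ, i ≤ j → t j ≤ t i := fun i j h =>
    pow_le_pow_left₀ (hs_nonneg j) (hs_anti i j h) 2
  have hkey := DPTB_key_sum ν (2 * r) t ρ ht0 hta hρ0 hρ1 n (min_le_right m n) hρsum
  have hlift : ∑ k ∈ Finset.range ν, t k * ρ k
      ≤ ∑ k : Fin n, (if (k : ℕ) < m then s (k : ℕ) ^ 2 else 0) * R k k := by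
    have hconv : ∑ k : Fin n, (if (k : ℕ) < m then s (k : ℕ) ^ 2 else 0) * R k k
        = ∑ k ∈ Finset.range n, (if k < m then t k else 0) * ρ k := by
      rw [← Fin.sum_univ_eq_sum_range (fun k => (if k < m then t k else 0) * ρ k) n]
      exact Finset.sum_congr rfl fun i _ => by rw [hρfin i]
    rw [hconv]
    have hsub : ∑ k ∈ Finset.range ν, (if k < m then t k else 0) * ρ k
        ≤ ∑ k ∈ Finset.range n, (if k < m then t k else 0) * ρ k := by
      apply Finset.sum_le_sum_of_subset_of_nonneg
      · exact Finset.range_subset_range.mpr (min_le_right m n)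
      · intro k _ _
        apply mul_nonneg _ (hρ0 k)
        split
        · exact ht0 k
        · exact le_rfl
    refine le_trans (le_of_eq ?_) hsub
    refine Finset.sum_congr rfl fun k hk => ?_
    have : k < m := lt_of_lt_of_le (Finset.mem_range.mp hk) (min_le_left m n)
    rw [if_pos this]
  calc (∑ k ∈ Finset.Ico (2 * r) ν, t k)
      ≤ ∑ k ∈ Finset.range ν, t k * ρ k := hkey
    _ ≤ ∑ k : Fin n, (if (k : ℕ) < m then s (k : ℕ) ^ 2 else 0) * R k k := hlift
    _ = DPTBfsq (D * R) := hDR.symm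
    _ ≤ DPTBfsq M := hle1
    _ = DPTBfsq ((1 - P) * F * (1 - Q)) := hfsqG.symm


end DPTBaux

/-- If `P`, `Q` are orthogonal projections (symmetric idempotents) of rank at most `r`,
then `‖(I − P) F (I − Q)‖_F ≥ (Σ_{i ≥ 2r+1} s_i(F)²)^{1/2}`, where `s` lists the
singular values of `F` in decreasing order (given here by a full SVD of `F`). -/
theorem doubly_projected_tail_bound {m n r : ℕ}
    (F : Matrix (Fin m) (Fin n) ℝ)
    (P : Matrix (Fin m) (Fin m) ℝ) (Q : Matrix (Fin n) (Fin n) ℝ)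
    (hPsymm : Pᵀ = P) (hPidem : P * P = P) (hPrank : P.rank ≤ r)
    (hQsymm : Qᵀ = Q) (hQidem : Q * Q = Q) (hQrank : Q.rank ≤ r)
    -- a full SVD of `F` with ordered singular values `s`
    (UF : Matrix (Fin m) (Fin m) ℝ) (VF : Matrix (Fin n) (Fin n) ℝ)
    (s : ℕ → ℝ)
    (hUF : UFᵀ * UF = 1) (hVF : VFᵀ * VF = 1)
    (hs_anti : ∀ i j, i ≤ j → s j ≤ s i) (hs_nonneg : ∀ i, 0 ≤ s i)
    (hFsvd : F = UF * (Matrix.of fun (i : Fin m) (j : Fin n) =>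
                  if (i : ℕ) = (j : ℕ) then s i else 0) * VFᵀ) :
    Real.sqrt (∑ i ∈ Finset.Ico (2 * r) (min m n), s i ^ 2)
      ≤ frobNorm ((1 - P) * F * (1 - Q)) := by
  have h := DPTB_main F P Q hPsymm hPidem hPrank hQsymm hQidem hQrank
    UF VF s hUF hVF hs_anti hs_nonneg hFsvd
  have hfrob : frobNorm ((1 - P) * F * (1 - Q))
      = Real.sqrt (DPTBfsq ((1 - P) * F * (1 - Q))) := rfl
  rw [hfrob]
  exact Real.sqrt_le_sqrt h
end

section
/- Assume J ∈ ℝ^{n×(d_in·d_out)} satisfies JᵀJ = S ⊗ T with thin spectral decompositions S = U_S D_S U_Sᵀ (rank r_s), T = U_T D_T U_Tᵀ (rank r_t). Let z ∈ ℝⁿ, let G ∈ ℝ^{d_out×d_in} satisfy vec(G) = −Jᵀz, and let F = D_T^{−1/2} U_Tᵀ G U_S D_S^{−1/2} have rank at least r with s_r(F) > 0. Let L_r = U_T D_T^{−1/2} U_{F,r}, R_r = U_S D_S^{−1/2} V_{F,r} (top-r singular modes of F), M = −Π_{L_r} G Π_{R_r} ≠ 0 with any thin SVD M = U_M D_M V_Mᵀ,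 and for γ > 0 set A₀ᵀ = (d_out^{1/4}/(γ‖M‖₂^{1/2})) V_{M,r} D_{M,r}^{1/2} and B₀ = (d_out^{1/4}/(γ‖M‖₂^{1/2})) U_{M,r} D_{M,r}^{1/2}, and H = [I ⊗ B₀ | A₀ᵀ ⊗ I]. Then ‖(JJ† − (JH)(JH)†) z‖₂ ≤ ( Σ_{i ≥ r+1} s_i(F)² )^{1/2}. -/
open Matrix
open scoped Kronecker

/-- Euclidean norm of a vector. -/
noncomputable def euclidNorm {ι : Type*} [Fintype ι] (v : ι → ℝ) : ℝ :=
  Real.sqrt (∑ i, v i ^ 2)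

/-- Spectral norm (operator 2-norm) of a matrix. -/
noncomputable def specNorm {ι κ : Type*} [Fintype ι] [Fintype κ] (A : Matrix ι κ ℝ) : ℝ :=
  sSup {c | ∃ x : κ → ℝ, euclidNorm x = 1 ∧ c = euclidNorm (A.mulVec x)}

section Helpers

lemma enorm_eq_sqrt_dot {ι : Type*} [Fintype ι] (v : ι → ℝ) :
    euclidNorm v = Real.sqrt (v ⬝ᵥ v) := by
  simp [euclidNorm, dotProduct, sq]

lemma dot_self_nonneg' {ι : Type*} [Fintype ι] (v : ι → ℝ) : 0 ≤ v ⬝ᵥ v :=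
  Finset.sum_nonneg fun i _ => mul_self_nonneg _

lemma enorm_le_of_dot_eq_zero {ι : Type*} [Fintype ι] (a b : ι → ℝ) (h : a ⬝ᵥ b = 0) :
    euclidNorm a ≤ euclidNorm (a + b) := by
  rw [enorm_eq_sqrt_dot, enorm_eq_sqrt_dot]
  apply Real.sqrt_le_sqrt
  have hexp : (a + b) ⬝ᵥ (a + b) = a ⬝ᵥ a + 2 * (a ⬝ᵥ b) + b ⬝ᵥ b := by
    simp only [add_dotProduct, dotProduct_add, dotProduct_comm b a]
    ring
  rw [hexp, h]
  nlinarith [dot_self_nonneg' b]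

def vecM {p q : Type*} (B : Matrix p q ℝ) : q × p → ℝ := fun x => B x.2 x.1

lemma vecM_sub {p q : Type*} (A B : Matrix p q ℝ) : vecM A - vecM B = vecM (A - B) := rfl

lemma vecM_neg {p q : Type*} (A : Matrix p q ℝ) : -vecM A = vecM (-A) := rfl

lemma kron_mulVec {l m p q : Type*} [Fintype m] [Fintype q]
    (A : Matrix l m ℝ) (B : Matrix p q ℝ) (X : Matrix q m ℝ) :
    (A ⊗ₖ B) *ᵥ vecM X = vecM (B * X * Aᵀ) := by
  funext c
  obtain ⟨j, i⟩ := c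
  simp only [mulVec, dotProduct, vecM, Fintype.sum_prod_type, kroneckerMap_apply,
    mul_apply, transpose_apply, Finset.sum_mul, Finset.mul_sum]
  apply Finset.sum_congr rfl
  intro y2 _
  apply Finset.sum_congr rfl
  intro x _
  ring

lemma submatrix_mul_id {l l' m n : Type*} [Fintype m]
    (A : Matrix l m ℝ) (B : Matrix m n ℝ) (f : l' → l) :
    A.submatrix f id * B = (A * B).submatrix f id := by
  ext i j; simp [mul_apply]

lemma mul_submatrix_id {l m n n' : Type*} [Fintype m]
    (A : Matrix l m ℝ) (B : Matrix m n ℝ) (f : n' → n) :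
    A * B.submatrix id f = (A * B).submatrix id f := by
  ext i j; simp [mul_apply]

lemma eq_zero_of_mul_transpose_self {m n : Type*} [Fintype m] [Fintype n]
    (A : Matrix m n ℝ) (h : A * Aᵀ = 0) : A = 0 := by
  ext i j
  have h1 : (A * Aᵀ) i i = 0 := by rw [h]; rfl
  rw [mul_apply] at h1
  have h2 : ∑ k, A i k ^ 2 = 0 := by
    rw [← h1]; exact Finset.sum_congr rfl fun k _ => by simp [transpose_apply, sq]
  have h3 := (Finset.sum_eq_zero_iff_of_nonneg fun k _ => sq_nonneg (A i k)).mp h2 j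
    (Finset.mem_univ j)
  simpa using pow_eq_zero_iff two_ne_zero |>.mp h3

lemma sum_sq_eq_trace {m n : Type*} [Fintype m] [Fintype n] (B : Matrix m n ℝ) :
    ∑ i, ∑ j, B i j ^ 2 = Matrix.trace (Bᵀ * B) := by
  rw [Matrix.trace]
  rw [Finset.sum_comm]
  exact Finset.sum_congr rfl fun j _ => by
    simp [Matrix.diag, mul_apply, sq]

end Helpers

section Helpers2

lemma sum_ite_val {rs : ℕ} (k : ℕ) (f : Fin rs → ℝ) :
    ∑ j : Fin rs, (if k = (j : ℕ) then f j else 0)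
      = if h : k < rs then f ⟨k, h⟩ else 0 := by
  by_cases h : k < rs
  · rw [dif_pos h, Finset.sum_eq_single (⟨k, h⟩ : Fin rs)]
    · simp
    · intro b _ hb
      rw [if_neg]
      intro hc
      exact hb (Fin.ext hc.symm)
    · intro h'; exact absurd (Finset.mem_univ _) h'
  · rw [dif_neg h]
    apply Finset.sum_eq_zero
    intro j _
    rw [if_neg]
    intro hc
    exact h (hc ▸ j.isLt)

lemma trunc_svd_eq {p q rt rs r : ℕ} (hrt : r ≤ rt) (hrs : r ≤ rs)
    (U : Matrix (Fin p) (Fin rt) ℝ) (V : Matrix (Fin q) (Fin rs) ℝ) (d : ℕ → ℝ) :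
    U.submatrix id (Fin.castLE hrt) * diagonal (fun i : Fin r => d i) *
      (V.submatrix id (Fin.castLE hrs))ᵀ =
    U * (Matrix.of fun (i : Fin rt) (j : Fin rs) =>
        if (i : ℕ) = (j : ℕ) ∧ (i : ℕ) < r then d i else 0) * Vᵀ := by
  ext a b
  -- LHS entry
  have hlhs : (U.submatrix id (Fin.castLE hrt) * diagonal (fun i : Fin r => d i) *
      (V.submatrix id (Fin.castLE hrs))ᵀ) a b
      = ∑ k : Fin r, U a (Fin.castLE hrt k) * d k * V b (Fin.castLE hrs k) := by
    rw [mul_apply]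
    apply Finset.sum_congr rfl
    intro k _
    rw [Matrix.mul_diagonal]
    simp [Matrix.submatrix_apply]
  -- RHS entry
  have hrhs : (U * (Matrix.of fun (i : Fin rt) (j : Fin rs) =>
        if (i : ℕ) = (j : ℕ) ∧ (i : ℕ) < r then d i else 0) * Vᵀ) a b
      = ∑ e : Fin rt, (if h : (e : ℕ) < r then
          U a e * d e * V b (Fin.castLE hrs ⟨(e : ℕ), h⟩) else 0) := by
    rw [mul_apply]
    simp only [mul_apply, Finset.sum_mul]
    rw [Finset.sum_comm]
    apply Finset.sum_congr rfl
    intro e _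
    by_cases he : (e : ℕ) < r
    · rw [dif_pos he]
      have : ∀ c : Fin rs, U a e * Matrix.of (fun (i : Fin rt) (j : Fin rs) =>
          if (i : ℕ) = (j : ℕ) ∧ (i : ℕ) < r then d i else 0) e c * Vᵀ c b
          = if (e : ℕ) = (c : ℕ) then U a e * d e * V b c else 0 := by
        intro c
        by_cases hc : (e : ℕ) = (c : ℕ)
        · have he' : (c : ℕ) < r := hc ▸ he
          simp [Matrix.of_apply, hc, he', transpose_apply]
        · simp [Matrix.of_apply, hc]
      rw [Finset.sum_congr rfl fun c _ => this c, sum_ite_val (↑e)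
        (fun c => U a e * d e * V b c), dif_pos (lt_of_lt_of_le he hrs)]
      rfl
    · rw [dif_neg he]
      apply Finset.sum_eq_zero
      intro c _
      simp [Matrix.of_apply, he]
  rw [hlhs, hrhs]
  -- convert both to sums over range
  have hL : ∑ k : Fin r, U a (Fin.castLE hrt k) * d k * V b (Fin.castLE hrs k)
      = ∑ k ∈ Finset.range r, (if h : k < r then
          U a (Fin.castLE hrt ⟨k, h⟩) * d k * V b (Fin.castLE hrs ⟨k, h⟩) else 0) := by
    rw [← Fin.sum_univ_eq_sum_range]
    apply Finset.sum_congr rfl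
    intro k _
    rw [dif_pos k.isLt]
  have hR : ∑ e : Fin rt, (if h : (e : ℕ) < r then
          U a e * d e * V b (Fin.castLE hrs ⟨(e : ℕ), h⟩) else 0)
      = ∑ k ∈ Finset.range rt, (if h : k < rt then (if h' : k < r then
          U a ⟨k, h⟩ * d k * V b (Fin.castLE hrs ⟨k, h'⟩) else 0) else 0) := by
    rw [← Fin.sum_univ_eq_sum_range]
    apply Finset.sum_congr rfl
    intro e _
    rw [dif_pos e.isLt]
  rw [hL, hR]
  rw [show Finset.range rt = Finset.range r ∪ (Finset.range rt \ Finset.range r) by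
    rw [Finset.union_sdiff_of_subset (Finset.range_subset_range.mpr hrt)]]
  rw [Finset.sum_union (Finset.disjoint_sdiff)]
  have hzero : ∑ k ∈ Finset.range rt \ Finset.range r, (if h : k < rt then (if h' : k < r then
          U a ⟨k, h⟩ * d k * V b (Fin.castLE hrs ⟨k, h'⟩) else 0) else 0) = 0 := by
    apply Finset.sum_eq_zero
    intro k hk
    simp only [Finset.mem_sdiff, Finset.mem_range] at hk
    rw [dif_pos hk.1, dif_neg hk.2]
  rw [hzero, add_zero]
  apply Finset.sum_congr rfl
  intro k hk
  simp only [Finset.mem_range] at hk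
  rw [dif_pos hk, dif_pos (lt_of_lt_of_le hk hrt), dif_pos hk]
  rfl

lemma tail_sum {rt rs r : ℕ} (s : ℕ → ℝ) :
    ∑ i : Fin rt, ∑ j : Fin rs,
        (if (i : ℕ) = (j : ℕ) ∧ r ≤ (i : ℕ) then s i else 0) ^ 2
      = ∑ k ∈ Finset.Ico r (min rt rs), s k ^ 2 := by
  have hinner : ∀ i : Fin rt, ∑ j : Fin rs,
      (if (i : ℕ) = (j : ℕ) ∧ r ≤ (i : ℕ) then s i else 0) ^ 2
      = if (i : ℕ) < rs ∧ r ≤ (i : ℕ) then s i ^ 2 else 0 := by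
    intro i
    have : ∀ j : Fin rs, (if (i : ℕ) = (j : ℕ) ∧ r ≤ (i : ℕ) then s i else 0) ^ 2
        = if (i : ℕ) = (j : ℕ) then (if r ≤ (i : ℕ) then s i ^ 2 else 0) else 0 := by
      intro j
      by_cases h1 : (i : ℕ) = (j : ℕ) <;> by_cases h2 : r ≤ (i : ℕ) <;>
        simp [h1, h2]
    rw [Finset.sum_congr rfl fun j _ => this j, sum_ite_val (↑i)
      (fun _ => if r ≤ (i : ℕ) then s i ^ 2 else 0)]
    by_cases h : (i : ℕ) < rs <;> by_cases h2 : r ≤ (i : ℕ) <;> simp [h, h2]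
  rw [Finset.sum_congr rfl fun i _ => hinner i]
  rw [Fin.sum_univ_eq_sum_range (fun k => if k < rs ∧ r ≤ k then s k ^ 2 else 0) rt]
  rw [Finset.sum_ite, Finset.sum_const_zero, add_zero]
  apply Finset.sum_nbij' (fun k => k) (fun k => k)
  · intro k hk
    simp only [Finset.mem_filter, Finset.mem_range] at hk
    simp only [Finset.mem_Ico, lt_min_iff]
    exact ⟨hk.2.2, hk.1, hk.2.1⟩
  · intro k hk
    simp only [Finset.mem_Ico, lt_min_iff] at hk
    simp only [Finset.mem_filter, Finset.mem_range]
    exact ⟨hk.2.1, hk.2.2, hk.1⟩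
  · intro k _; rfl
  · intro k _; rfl
  · intro k _; rfl

lemma frob_conj {rt rs : ℕ} (U : Matrix (Fin rt) (Fin rt) ℝ) (V : Matrix (Fin rs) (Fin rs) ℝ)
    (A : Matrix (Fin rt) (Fin rs) ℝ) (hU : Uᵀ * U = 1) (hV : Vᵀ * V = 1) :
    ∑ i, ∑ j, (U * A * Vᵀ) i j ^ 2 = ∑ i, ∑ j, A i j ^ 2 := by
  rw [sum_sq_eq_trace, sum_sq_eq_trace]
  have key : (U * A * Vᵀ)ᵀ * (U * A * Vᵀ) = V * (Aᵀ * A * Vᵀ) := by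
    calc (U * A * Vᵀ)ᵀ * (U * A * Vᵀ)
        = V * (Aᵀ * ((Uᵀ * U) * (A * Vᵀ))) := by
          simp only [transpose_mul, transpose_transpose, Matrix.mul_assoc]
      _ = V * (Aᵀ * A * Vᵀ) := by rw [hU, Matrix.one_mul, Matrix.mul_assoc]
  rw [key, Matrix.trace_mul_comm, Matrix.mul_assoc, Matrix.mul_assoc, hV, Matrix.mul_one]

lemma specNorm_pos {ι κ : Type*} [Fintype ι] [Fintype κ] [DecidableEq κ] [Nonempty κ]
    (A : Matrix ι κ ℝ) (hA : A ≠ 0) : 0 < specNorm A := by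
  have : ∃ i j, A i j ≠ 0 := by
    by_contra h
    push_neg at h
    exact hA (by ext i j; simpa using h i j)
  obtain ⟨i, j, hij⟩ := this
  set x : κ → ℝ := fun k => if k = j then 1 else 0 with hx
  have hxnorm : euclidNorm x = 1 := by
    rw [euclidNorm]
    rw [show ∑ k, x k ^ 2 = 1 by
      rw [hx]; rw [Finset.sum_eq_single j] <;> simp +contextual]
    exact Real.sqrt_one
  have hAx : A *ᵥ x = fun i' => A i' j := by
    funext i'
    rw [mulVec, dotProduct, hx]
    rw [Finset.sum_eq_single j] <;> simp +contextual
  have hmem : euclidNorm (A *ᵥ x) ∈ {c | ∃ x : κ → ℝ, euclidNorm x = 1 ∧ c = euclidNorm (A.mulVec x)} :=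
    ⟨x, hxnorm, rfl⟩
  have hpos : 0 < euclidNorm (A *ᵥ x) := by
    rw [hAx, euclidNorm]
    apply Real.sqrt_pos.mpr
    have h1 : A i j ^ 2 ≤ ∑ i', A i' j ^ 2 :=
      Finset.single_le_sum (fun k _ => sq_nonneg (A k j)) (Finset.mem_univ i)
    have h2 : 0 < A i j ^ 2 := lt_of_le_of_ne (sq_nonneg _) (Ne.symm (pow_ne_zero 2 hij))
    linarith
  have hbdd : BddAbove {c | ∃ x : κ → ℝ, euclidNorm x = 1 ∧ c = euclidNorm (A.mulVec x)} := by
    refine ⟨Real.sqrt (∑ i', ∑ j', A i' j' ^ 2), ?_⟩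
    rintro c ⟨v, hv, rfl⟩
    rw [euclidNorm]
    apply Real.sqrt_le_sqrt
    have hv2 : ∑ k, v k ^ 2 = 1 := by
      have := hv
      rw [euclidNorm] at this
      have h0 : 0 ≤ ∑ k, v k ^ 2 := Finset.sum_nonneg fun k _ => sq_nonneg _
      nlinarith [Real.sq_sqrt h0]
    apply Finset.sum_le_sum
    intro i' _
    rw [mulVec, dotProduct]
    calc (∑ k, A i' k * v k) ^ 2 ≤ (∑ k, A i' k ^ 2) * ∑ k, v k ^ 2 :=
          Finset.sum_mul_sq_le_sq_mul_sq _ _ _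
      _ = ∑ k, A i' k ^ 2 := by rw [hv2, mul_one]
  calc (0 : ℝ) < euclidNorm (A *ᵥ x) := hpos
    _ ≤ specNorm A := le_csSup hbdd hmem

end Helpers2

lemma dot_mulVec_self {m n : Type*} [Fintype m] [Fintype n] (A : Matrix m n ℝ) (v : n → ℝ) :
    (A *ᵥ v) ⬝ᵥ (A *ᵥ v) = v ⬝ᵥ ((Aᵀ * A) *ᵥ v) := by
  rw [← Matrix.mulVec_mulVec, Matrix.dotProduct_mulVec v, Matrix.vecMul_transpose,
    dotProduct_comm]



/-- Theorem (CG-LoRA, squared loss): under the K-FAC assumption, the curvature-guided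
initialization built from the top-`r` modes of the whitened gradient `F` reduces the
prediction alignment gap to the rank-`(r+1)` tail of the singular values of `F`:
`‖(JJ† − (JH)(JH)†)z‖₂ ≤ (Σ_{i ≥ r+1} s_i(F)²)^{1/2}`. -/
theorem cg_lora_squared_loss {n din dout rs rt r : ℕ}
    (hrt : r ≤ rt) (hrs : r ≤ rs) (γ : ℝ) (hγ : 0 < γ)
    (J : Matrix (Fin n) (Fin din × Fin dout) ℝ)
    (S : Matrix (Fin din) (Fin din) ℝ) (T : Matrix (Fin dout) (Fin dout) ℝ)
    (US : Matrix (Fin din) (Fin rs) ℝ) (UT : Matrix (Fin dout) (Fin rt) ℝ)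
    (dS : Fin rs → ℝ) (dT : Fin rt → ℝ)
    (hUS : USᵀ * US = 1) (hUT : UTᵀ * UT = 1)
    (hdS : ∀ i, 0 < dS i) (hdT : ∀ i, 0 < dT i)
    (hS : S = US * diagonal dS * USᵀ) (hT : T = UT * diagonal dT * UTᵀ)
    (hkfac : Jᵀ * J = S ⊗ₖ T)
    (z : Fin n → ℝ)
    (G : Matrix (Fin dout) (Fin din) ℝ)
    (hG : ∀ (i : Fin dout) (j : Fin din), G i j = -(Jᵀ.mulVec z) (j, i))
    (F : Matrix (Fin rt) (Fin rs) ℝ)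
    (hF : F = diagonal (fun i => (Real.sqrt (dT i))⁻¹) * UTᵀ * G
              * US * diagonal (fun i => (Real.sqrt (dS i))⁻¹))
    -- a full SVD of `F` with ordered singular values `s`; `rank F ≥ r`, i.e. `s_r(F) > 0`
    (UF : Matrix (Fin rt) (Fin rt) ℝ) (VF : Matrix (Fin rs) (Fin rs) ℝ)
    (s : ℕ → ℝ)
    (hUF : UFᵀ * UF = 1) (hVF : VFᵀ * VF = 1)
    (hs_anti : ∀ i j, i ≤ j → s j ≤ s i) (hs_nonneg : ∀ i, 0 ≤ s i)
    (hs_top : ∀ i, i < r → 0 < s i)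
    (hFsvd : F = UF * (Matrix.of fun (i : Fin rt) (j : Fin rs) =>
                  if (i : ℕ) = (j : ℕ) then s i else 0) * VFᵀ)
    -- the CG-LoRA left/right modes and their Moore–Penrose pseudoinverses
    (L : Matrix (Fin dout) (Fin r) ℝ)
    (hL : L = UT * diagonal (fun i => (Real.sqrt (dT i))⁻¹) * UF.submatrix id (Fin.castLE hrt))
    (R : Matrix (Fin din) (Fin r) ℝ)
    (hR : R = US * diagonal (fun i => (Real.sqrt (dS i))⁻¹) * VF.submatrix id (Fin.castLE hrs))
    (Lp : Matrix (Fin r) (Fin dout) ℝ) (hLp : IsMPInv L Lp)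
    (Rp : Matrix (Fin r) (Fin din) ℝ) (hRp : IsMPInv R Rp)
    -- `M = −Π_{L_r} G Π_{R_r} ≠ 0` with any thin SVD `M = U_M D_M V_Mᵀ`
    (M : Matrix (Fin dout) (Fin din) ℝ)
    (hM : M = -((L * Lp) * G * (R * Rp))) (hMne : M ≠ 0)
    (kM : ℕ) (hkM : r ≤ kM)
    (UM : Matrix (Fin dout) (Fin kM) ℝ) (VM : Matrix (Fin din) (Fin kM) ℝ)
    (dM : Fin kM → ℝ)
    (hUM : UMᵀ * UM = 1) (hVM : VMᵀ * VM = 1)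
    (hdM_pos : ∀ i, 0 < dM i) (hdM_anti : ∀ i j : Fin kM, i ≤ j → dM j ≤ dM i)
    (hMsvd : M = UM * diagonal dM * VMᵀ)
    -- the CG-LoRA initialization
    (A₀ : Matrix (Fin r) (Fin din) ℝ) (B₀ : Matrix (Fin dout) (Fin r) ℝ)
    (hA₀ : A₀ᵀ = ((dout : ℝ) ^ ((1 : ℝ)/4) / (γ * Real.sqrt (specNorm M)))
              • (VM.submatrix id (Fin.castLE hkM)
                  * diagonal (fun i : Fin r => Real.sqrt (dM (Fin.castLE hkM i)))))
    (hB₀ : B₀ = ((dout : ℝ) ^ ((1 : ℝ)/4) / (γ * Real.sqrt (specNorm M)))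
              • (UM.submatrix id (Fin.castLE hkM)
                  * diagonal (fun i : Fin r => Real.sqrt (dM (Fin.castLE hkM i)))))
    (H : Matrix (Fin din × Fin dout) ((Fin din × Fin r) ⊕ (Fin r × Fin dout)) ℝ)
    (hH : H = fromCols ((1 : Matrix (Fin din) (Fin din) ℝ) ⊗ₖ B₀)
                (A₀ᵀ ⊗ₖ (1 : Matrix (Fin dout) (Fin dout) ℝ)))
    (Jp : Matrix (Fin din × Fin dout) (Fin n) ℝ) (hJp : IsMPInv J Jp)
    (JHp : Matrix ((Fin din × Fin r) ⊕ (Fin r × Fin dout)) (Fin n) ℝ)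
    (hJHp : IsMPInv (J * H) JHp) :
    euclidNorm ((J * Jp - (J * H) * JHp).mulVec z)
      ≤ Real.sqrt (∑ i ∈ Finset.Ico r (min rt rs), s i ^ 2) := by
  obtain ⟨hJp1, hJp2, hJp3, hJp4⟩ := hJp
  obtain ⟨hJHp1, hJHp2, hJHp3, hJHp4⟩ := hJHp
  obtain ⟨hLp1, hLp2, hLp3, hLp4⟩ := hLp
  obtain ⟨hRp1, hRp2, hRp3, hRp4⟩ := hRp
  -- square-root facts
  have hsT : ∀ i, Real.sqrt (dT i) ≠ 0 := fun i => ne_of_gt (Real.sqrt_pos.mpr (hdT i))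
  have hsS : ∀ i, Real.sqrt (dS i) ≠ 0 := fun i => ne_of_gt (Real.sqrt_pos.mpr (hdS i))
  -- diagonal matrices
  set DTi : Matrix (Fin rt) (Fin rt) ℝ := diagonal (fun i => (Real.sqrt (dT i))⁻¹) with hDTi
  set DSi : Matrix (Fin rs) (Fin rs) ℝ := diagonal (fun i => (Real.sqrt (dS i))⁻¹) with hDSi
  set DTh : Matrix (Fin rt) (Fin rt) ℝ := diagonal (fun i => Real.sqrt (dT i)) with hDTh
  set DSh : Matrix (Fin rs) (Fin rs) ℝ := diagonal (fun i => Real.sqrt (dS i)) with hDSh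
  have hDThi : DTh * DTi = 1 := by
    rw [hDTh, hDTi, diagonal_mul_diagonal,
      show (fun i => Real.sqrt (dT i) * (Real.sqrt (dT i))⁻¹) = fun _ => (1 : ℝ) from
        funext fun i => mul_inv_cancel₀ (hsT i), diagonal_one]
  have hDTih : DTi * DTh = 1 := by
    rw [hDTh, hDTi, diagonal_mul_diagonal,
      show (fun i => (Real.sqrt (dT i))⁻¹ * Real.sqrt (dT i)) = fun _ => (1 : ℝ) from
        funext fun i => inv_mul_cancel₀ (hsT i), diagonal_one]
  have hDShi : DSh * DSi = 1 := by
    rw [hDSh, hDSi, diagonal_mul_diagonal,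
      show (fun i => Real.sqrt (dS i) * (Real.sqrt (dS i))⁻¹) = fun _ => (1 : ℝ) from
        funext fun i => mul_inv_cancel₀ (hsS i), diagonal_one]
  have hDSih : DSi * DSh = 1 := by
    rw [hDSh, hDSi, diagonal_mul_diagonal,
      show (fun i => (Real.sqrt (dS i))⁻¹ * Real.sqrt (dS i)) = fun _ => (1 : ℝ) from
        funext fun i => inv_mul_cancel₀ (hsS i), diagonal_one]
  have hDT2 : DTh * DTh = diagonal dT := by
    rw [hDTh, diagonal_mul_diagonal,
      show (fun i => Real.sqrt (dT i) * Real.sqrt (dT i)) = dT from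
        funext fun i => Real.mul_self_sqrt (le_of_lt (hdT i))]
  have hDS2 : DSh * DSh = diagonal dS := by
    rw [hDSh, diagonal_mul_diagonal,
      show (fun i => Real.sqrt (dS i) * Real.sqrt (dS i)) = dS from
        funext fun i => Real.mul_self_sqrt (le_of_lt (hdS i))]
  have hDTit : DTiᵀ = DTi := by rw [hDTi]; exact diagonal_transpose _
  have hDSit : DSiᵀ = DSi := by rw [hDSi]; exact diagonal_transpose _
  have hDTht : DThᵀ = DTh := by rw [hDTh]; exact diagonal_transpose _
  have hDSht : DShᵀ = DSh := by rw [hDSh]; exact diagonal_transpose _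
  -- cancellation helpers
  have cUT : ∀ {κ : Type} (X : Matrix (Fin rt) κ ℝ), UTᵀ * (UT * X) = X := by
    intro κ X; rw [← Matrix.mul_assoc, hUT, Matrix.one_mul]
  have cUS : ∀ {κ : Type} (X : Matrix (Fin rs) κ ℝ), USᵀ * (US * X) = X := by
    intro κ X; rw [← Matrix.mul_assoc, hUS, Matrix.one_mul]
  have cDThi : ∀ {κ : Type} (X : Matrix (Fin rt) κ ℝ), DTh * (DTi * X) = X := by
    intro κ X; rw [← Matrix.mul_assoc, hDThi, Matrix.one_mul]
  have cDTih : ∀ {κ : Type} (X : Matrix (Fin rt) κ ℝ), DTi * (DTh * X) = X := by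
    intro κ X; rw [← Matrix.mul_assoc, hDTih, Matrix.one_mul]
  have cDShi : ∀ {κ : Type} (X : Matrix (Fin rs) κ ℝ), DSh * (DSi * X) = X := by
    intro κ X; rw [← Matrix.mul_assoc, hDShi, Matrix.one_mul]
  have cDSih : ∀ {κ : Type} (X : Matrix (Fin rs) κ ℝ), DSi * (DSh * X) = X := by
    intro κ X; rw [← Matrix.mul_assoc, hDSih, Matrix.one_mul]
  -- the factor W with J^T J = W W^T
  set Wl : Matrix (Fin din) (Fin rs) ℝ := US * DSh with hWl
  set Wr : Matrix (Fin dout) (Fin rt) ℝ := UT * DTh with hWr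
  set W : Matrix (Fin din × Fin dout) (Fin rs × Fin rt) ℝ := Wl ⊗ₖ Wr with hW
  have hWt : Wᵀ = Wlᵀ ⊗ₖ Wrᵀ := (kroneckerMap_transpose _ _ _).symm
  have hWlWl : Wlᵀ * Wl = diagonal dS := by
    rw [hWl, Matrix.transpose_mul, hDSht, Matrix.mul_assoc, cUS, hDS2]
  have hWrWr : Wrᵀ * Wr = diagonal dT := by
    rw [hWr, Matrix.transpose_mul, hDTht, Matrix.mul_assoc, cUT, hDT2]
  have hWtW : Wᵀ * W = diagonal dS ⊗ₖ diagonal dT := by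
    rw [hWt, hW, ← Matrix.mul_kronecker_mul, hWlWl, hWrWr]
  have hWlWlT : Wl * Wlᵀ = S := by
    rw [hWl, Matrix.transpose_mul, hDSht, hS, Matrix.mul_assoc, ← Matrix.mul_assoc DSh DSh,
      hDS2, Matrix.mul_assoc]
  have hWrWrT : Wr * Wrᵀ = T := by
    rw [hWr, Matrix.transpose_mul, hDTht, hT, Matrix.mul_assoc, ← Matrix.mul_assoc DTh DTh,
      hDT2, Matrix.mul_assoc]
  have hJtJ : Jᵀ * J = W * Wᵀ := by
    rw [hkfac, hW, hWt, ← Matrix.mul_kronecker_mul, hWlWlT, hWrWrT]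
  -- the whitened gradient identity
  have hDFD : UTᵀ * (G * US) = DTh * (F * DSh) := by
    rw [hF]
    simp only [Matrix.mul_assoc]
    rw [hDSih, Matrix.mul_one, cDThi]
  -- G lies in the right column/row spaces
  set PiS : Matrix (Fin din) (Fin din) ℝ := US * USᵀ with hPiS
  set PiT : Matrix (Fin dout) (Fin dout) ℝ := UT * UTᵀ with hPiT
  have hPiSt : PiSᵀ = PiS := by rw [hPiS, Matrix.transpose_mul, Matrix.transpose_transpose]
  have hPiTt : PiTᵀ = PiT := by rw [hPiT, Matrix.transpose_mul, Matrix.transpose_transpose]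
  have hPiSS : PiS * S = S := by
    rw [hPiS, hS]; simp only [Matrix.mul_assoc]; rw [cUS]
  have hSPiS : S * PiS = S := by
    rw [hPiS, hS]; simp only [Matrix.mul_assoc]; rw [cUS]
  have hPiTT : PiT * T = T := by
    rw [hPiT, hT]; simp only [Matrix.mul_assoc]; rw [cUT]
  have hTPiT : T * PiT = T := by
    rw [hPiT, hT]; simp only [Matrix.mul_assoc]; rw [cUT]
  have hPikt : (PiS ⊗ₖ PiT)ᵀ = PiS ⊗ₖ PiT := by
    rw [← kroneckerMap_transpose, hPiSt, hPiTt]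
  have hPiK : (PiS ⊗ₖ PiT) * (S ⊗ₖ T) = S ⊗ₖ T := by
    rw [← Matrix.mul_kronecker_mul, hPiSS, hPiTT]
  have hKPi : (S ⊗ₖ T) * (PiS ⊗ₖ PiT) = S ⊗ₖ T := by
    rw [← Matrix.mul_kronecker_mul, hSPiS, hTPiT]
  have hPiJt : (PiS ⊗ₖ PiT) * Jᵀ = Jᵀ := by
    have hzero : ((PiS ⊗ₖ PiT) * Jᵀ - Jᵀ) * ((PiS ⊗ₖ PiT) * Jᵀ - Jᵀ)ᵀ = 0 := by
      rw [Matrix.transpose_sub, Matrix.transpose_mul, Matrix.transpose_transpose, hPikt]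
      rw [Matrix.sub_mul, Matrix.mul_sub, Matrix.mul_sub]
      have t1 : (PiS ⊗ₖ PiT) * Jᵀ * (J * (PiS ⊗ₖ PiT)) = S ⊗ₖ T := by
        rw [Matrix.mul_assoc, ← Matrix.mul_assoc Jᵀ J, hkfac, hKPi, hPiK]
      have t2 : (PiS ⊗ₖ PiT) * Jᵀ * J = S ⊗ₖ T := by
        rw [Matrix.mul_assoc, hkfac, hPiK]
      have t3 : Jᵀ * (J * (PiS ⊗ₖ PiT)) = S ⊗ₖ T := by
        rw [← Matrix.mul_assoc, hkfac, hKPi]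
      rw [t1, t2, t3, hkfac]
      abel
    have := eq_zero_of_mul_transpose_self _ hzero
    exact sub_eq_zero.mp this
  have hvG : vecM G = -(Jᵀ *ᵥ z) := by
    funext p
    simp only [vecM, hG p.2 p.1, Pi.neg_apply]
  have hJtz : Jᵀ *ᵥ z = -vecM G := by rw [hvG, neg_neg]
  have hGproj : PiT * G * PiS = G := by
    have h1 : (PiS ⊗ₖ PiT) *ᵥ vecM G = vecM G := by
      rw [hvG, Matrix.mulVec_neg, Matrix.mulVec_mulVec, hPiJt]
    rw [kron_mulVec PiS PiT G, hPiSt] at h1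
    ext i j
    exact congrFun h1 (j, i)
  have hGform : G = UT * (DTh * (F * (DSh * USᵀ))) := by
    have h2 : UTᵀ * (G * (US * USᵀ)) = DTh * (F * (DSh * USᵀ)) := by
      rw [← Matrix.mul_assoc G US, ← Matrix.mul_assoc UTᵀ, hDFD]
      simp only [Matrix.mul_assoc]
    calc G = PiT * G * PiS := hGproj.symm
      _ = UT * (UTᵀ * (G * (US * USᵀ))) := by rw [hPiT, hPiS]; simp only [Matrix.mul_assoc]
      _ = UT * (DTh * (F * (DSh * USᵀ))) := by rw [h2]
  -- the SVD pieces
  set UF' : Matrix (Fin rt) (Fin r) ℝ := UF.submatrix id (Fin.castLE hrt) with hUF'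
  set VF' : Matrix (Fin rs) (Fin r) ℝ := VF.submatrix id (Fin.castLE hrs) with hVF'
  set Sfull : Matrix (Fin rt) (Fin rs) ℝ := Matrix.of fun (i : Fin rt) (j : Fin rs) =>
    if (i : ℕ) = (j : ℕ) then s i else 0 with hSfull
  set Sigr : Matrix (Fin r) (Fin r) ℝ := diagonal (fun i : Fin r => s i) with hSigrdef
  set Sigri : Matrix (Fin r) (Fin r) ℝ := diagonal (fun i : Fin r => (s i)⁻¹) with hSigridef
  have hSigrSigri : Sigr * Sigri = 1 := by
    rw [hSigrdef, hSigridef, diagonal_mul_diagonal,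
      show (fun i : Fin r => s i * (s i)⁻¹) = fun _ => (1 : ℝ) from
        funext fun i => mul_inv_cancel₀ (ne_of_gt (hs_top i i.isLt)), diagonal_one]
  have cSig : ∀ {κ : Type} (X : Matrix (Fin r) κ ℝ), Sigr * (Sigri * X) = X := by
    intro κ X; rw [← Matrix.mul_assoc, hSigrSigri, Matrix.one_mul]
  have cUF : ∀ {κ : Type} (X : Matrix (Fin rt) κ ℝ), UFᵀ * (UF * X) = X := by
    intro κ X; rw [← Matrix.mul_assoc, hUF, Matrix.one_mul]
  have hUFV : UF'ᵀ * (F * VF') = Sigr := by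
    have step : UF'ᵀ * (F * VF')
        = (UFᵀ * (F * VF)).submatrix (Fin.castLE hrt) (Fin.castLE hrs) := by
      rw [hUF', hVF', Matrix.transpose_submatrix]
      rw [show F * VF.submatrix id (Fin.castLE hrs) = (F * VF).submatrix id (Fin.castLE hrs)
        from mul_submatrix_id F VF (Fin.castLE hrs)]
      rw [show UFᵀ.submatrix (Fin.castLE hrt) id * (F * VF).submatrix id (Fin.castLE hrs)
          = (UFᵀ * (F * VF).submatrix id (Fin.castLE hrs)).submatrix (Fin.castLE hrt) id
        from submatrix_mul_id UFᵀ _ (Fin.castLE hrt)]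
      rw [show UFᵀ * (F * VF).submatrix id (Fin.castLE hrs)
          = (UFᵀ * (F * VF)).submatrix id (Fin.castLE hrs)
        from mul_submatrix_id UFᵀ (F * VF) (Fin.castLE hrs)]
      rw [Matrix.submatrix_submatrix]
      rfl
    rw [step]
    have hcore : UFᵀ * (F * VF) = Sfull := by
      rw [hFsvd]
      simp only [Matrix.mul_assoc]
      rw [cUF]
      rw [hVF, Matrix.mul_one]
    rw [hcore]
    ext i j
    by_cases h : i = j
    · simp [hSfull, hSigrdef, h, Matrix.diagonal_apply_eq]
    · have hv : ((i : ℕ) : ℕ) ≠ (j : ℕ) := fun hc => h (Fin.ext hc)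
      simp [hSfull, hSigrdef, h, hv, Matrix.diagonal_apply_ne _ h]
  -- the key Gram identity  L^T G R = Sigr
  have hLtGR : Lᵀ * (G * R) = Sigr := by
    rw [hL, hR, hGform]
    simp only [Matrix.transpose_mul, Matrix.transpose_submatrix, hDTit, Matrix.mul_assoc]
    rw [cUT, cDTih, cUS, cDShi]
    exact hUFV
  -- M recovers L :  M * Zm = L
  have hLLp : L * Lp = Lpᵀ * Lᵀ := by
    calc L * Lp = (L * Lp)ᵀ := hLp3.symm
      _ = Lpᵀ * Lᵀ := Matrix.transpose_mul L Lp
  have cR : ∀ {κ : Type} (Y : Matrix (Fin r) κ ℝ), R * (Rp * (R * Y)) = R * Y := by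
    intro κ Y; rw [← Matrix.mul_assoc, ← Matrix.mul_assoc, hRp1]
  have cLGR : ∀ {κ : Type} (Y : Matrix (Fin r) κ ℝ), Lᵀ * (G * (R * Y)) = Sigr * Y := by
    intro κ Y
    rw [← Matrix.mul_assoc G R, ← Matrix.mul_assoc, ← Matrix.mul_assoc, Matrix.mul_assoc Lᵀ G,
      hLtGR]
  set Zm : Matrix (Fin din) (Fin r) ℝ := -(R * (Sigri * (Lᵀ * L))) with hZm
  have hMZ : M * Zm = L := by
    rw [hM, hZm, Matrix.neg_mul, Matrix.mul_neg, neg_neg]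
    simp only [Matrix.mul_assoc]
    rw [cR, ← Matrix.mul_assoc L Lp, hLLp]
    simp only [Matrix.mul_assoc]
    rw [cLGR, cSig, ← Matrix.mul_assoc, ← hLLp, hLp1]
  -- kM = r
  have hDiag : UMᵀ * (M * VM) = diagonal dM := by
    rw [hMsvd]
    simp only [Matrix.mul_assoc]
    rw [← Matrix.mul_assoc UMᵀ UM, hUM, Matrix.one_mul, hVM, Matrix.mul_one]
  have hunit : IsUnit (diagonal dM) := by
    rw [Matrix.isUnit_iff_isUnit_det, Matrix.det_diagonal]
    exact (Finset.prod_pos (fun i _ => hdM_pos i)).ne'.isUnit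
  have hrkM : r = kM := by
    have h1 : (diagonal dM).rank = kM := by
      rw [Matrix.rank_of_isUnit _ hunit, Fintype.card_fin]
    have hMLN : M = L * (-(Lp * (G * (R * Rp)))) := by
      rw [hM, Matrix.mul_neg]
      apply congrArg Neg.neg
      simp only [Matrix.mul_assoc]
    have h2 : (diagonal dM).rank ≤ r := by
      rw [← hDiag]
      rw [show UMᵀ * (M * VM) = (UMᵀ * L) * (-(Lp * (G * (R * Rp))) * VM) from by
        rw [hMLN]; simp only [Matrix.mul_assoc]]
      calc ((UMᵀ * L) * (-(Lp * (G * (R * Rp))) * VM)).rank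
          ≤ (UMᵀ * L).rank := Matrix.rank_mul_le_left _ _
        _ ≤ Fintype.card (Fin r) := Matrix.rank_le_card_width _
        _ = r := Fintype.card_fin r
    omega
  -- positivity of the scaling constant
  have hdoutpos : 0 < dout := by
    have : ∃ i j, M i j ≠ 0 := by
      by_contra hcon
      push_neg at hcon
      exact hMne (by ext i j; simpa using hcon i j)
    obtain ⟨i, _, _⟩ := this
    exact i.pos
  haveI : Nonempty (Fin din) := by
    have : ∃ i j, M i j ≠ 0 := by
      by_contra hcon
      push_neg at hcon
      exact hMne (by ext i j; simpa using hcon i j)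
    obtain ⟨_, j, _⟩ := this
    exact ⟨j⟩
  set c : ℝ := (dout : ℝ) ^ ((1 : ℝ)/4) / (γ * Real.sqrt (specNorm M)) with hcdef
  have hcpos : 0 < c := by
    apply div_pos
    · exact Real.rpow_pos_of_pos (by exact_mod_cast hdoutpos) _
    · exact mul_pos hγ (Real.sqrt_pos.mpr (specNorm_pos M hMne))
  -- the correction X = -(L Sigr Rᵀ) lies in the column space of B₀
  set X : Matrix (Fin dout) (Fin din) ℝ := -(L * (Sigr * Rᵀ)) with hXdef
  set Kf : Matrix (Fin kM) (Fin din) ℝ :=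
    -((diagonal dM) * (VMᵀ * (Zm * (Sigr * Rᵀ)))) with hKf
  have hXUM : X = UM * Kf := by
    rw [hXdef, hKf, Matrix.mul_neg]
    apply congrArg Neg.neg
    conv_lhs => rw [← hMZ]
    rw [hMsvd]
    simp only [Matrix.mul_assoc]
  set e2 : Fin r ≃ Fin kM := finCongr hrkM with he2def
  have he2c : ⇑e2 = Fin.castLE hkM := by
    funext i
    exact Fin.ext rfl
  set UM' : Matrix (Fin dout) (Fin r) ℝ := UM.submatrix id (Fin.castLE hkM) with hUM'
  set K' : Matrix (Fin r) (Fin din) ℝ := Kf.submatrix (Fin.castLE hkM) id with hK'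
  have hXUM' : X = UM' * K' := by
    rw [hXUM, hUM', hK', ← he2c]
    calc UM * Kf = (UM * Kf).submatrix id id := (Matrix.submatrix_id_id _).symm
      _ = UM.submatrix id ⇑e2 * Kf.submatrix (⇑e2) id :=
        (Matrix.submatrix_mul_equiv UM Kf id e2 id).symm
  set Dh : Matrix (Fin r) (Fin r) ℝ :=
    diagonal (fun i : Fin r => Real.sqrt (dM (Fin.castLE hkM i))) with hDh
  set Dhi : Matrix (Fin r) (Fin r) ℝ :=
    diagonal (fun i : Fin r => (Real.sqrt (dM (Fin.castLE hkM i)))⁻¹) with hDhi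
  have hDhc : Dh * Dhi = 1 := by
    rw [hDh, hDhi, diagonal_mul_diagonal,
      show (fun i : Fin r => Real.sqrt (dM (Fin.castLE hkM i)) *
          (Real.sqrt (dM (Fin.castLE hkM i)))⁻¹) = fun _ => (1 : ℝ) from
        funext fun i => mul_inv_cancel₀
          (ne_of_gt (Real.sqrt_pos.mpr (hdM_pos (Fin.castLE hkM i)))), diagonal_one]
  set A1 : Matrix (Fin r) (Fin din) ℝ := c⁻¹ • (Dhi * K') with hA1
  have hB0A : B₀ * A1 = X := by
    rw [hB₀, hA1, Matrix.smul_mul, Matrix.mul_smul, smul_smul,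
      mul_inv_cancel₀ (ne_of_gt hcpos), one_smul]
    simp only [Matrix.mul_assoc]
    rw [← Matrix.mul_assoc Dh Dhi, hDhc, Matrix.one_mul]
    exact hXUM'.symm
  set u : (Fin din × Fin r) ⊕ (Fin r × Fin dout) → ℝ := Sum.elim (vecM A1) 0 with hu
  have hHu : H *ᵥ u = vecM X := by
    rw [hH, hu, Matrix.fromCols_mulVec_sumElim, Matrix.mulVec_zero, add_zero,
      kron_mulVec (1 : Matrix (Fin din) (Fin din) ℝ) B₀ A1, Matrix.transpose_one,
      Matrix.mul_one, hB0A]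
  -- the orthogonality step
  have hPQJH : (J * Jp - J * H * JHp)ᵀ * (J * H) = 0 := by
    rw [Matrix.transpose_sub, hJp3, hJHp3, Matrix.sub_mul]
    have h1 : J * Jp * (J * H) = J * H := by rw [← Matrix.mul_assoc, hJp1]
    have h2 : J * H * JHp * (J * H) = J * H := hJHp1
    rw [h1, h2, sub_self]
  have horth : ((J * Jp - J * H * JHp) *ᵥ z) ⬝ᵥ ((J * H) *ᵥ (JHp *ᵥ z - u)) = 0 := by
    rw [Matrix.dotProduct_mulVec]
    have hvm : ((J * Jp - J * H * JHp) *ᵥ z) ᵥ* (J * H) = 0 := by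
      rw [← Matrix.vecMul_transpose, Matrix.vecMul_vecMul, hPQJH, Matrix.vecMul_zero]
    rw [hvm, zero_dotProduct]
  have hstep1 : euclidNorm ((J * Jp - J * H * JHp) *ᵥ z)
      ≤ euclidNorm (((J * Jp - J * H * JHp) *ᵥ z) + (J * H) *ᵥ (JHp *ᵥ z - u)) :=
    enorm_le_of_dot_eq_zero _ _ horth
  have hsumeq : ((J * Jp - J * H * JHp) *ᵥ z) + (J * H) *ᵥ (JHp *ᵥ z - u)
      = J *ᵥ (Jp *ᵥ z - vecM X) := by
    rw [Matrix.sub_mulVec, Matrix.mulVec_sub, Matrix.mulVec_sub]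
    rw [show (J * Jp) *ᵥ z = J *ᵥ (Jp *ᵥ z) from (Matrix.mulVec_mulVec z J Jp).symm]
    rw [show (J * H * JHp) *ᵥ z = (J * H) *ᵥ (JHp *ᵥ z) from
      (Matrix.mulVec_mulVec z (J * H) JHp).symm]
    rw [show (J * H) *ᵥ u = J *ᵥ vecM X from by
      rw [← Matrix.mulVec_mulVec, hHu]]
    abel
  -- pass to the whitened coordinates
  have hstep2 : euclidNorm (J *ᵥ (Jp *ᵥ z - vecM X)) = euclidNorm (Wᵀ *ᵥ (Jp *ᵥ z - vecM X)) := by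
    rw [enorm_eq_sqrt_dot, enorm_eq_sqrt_dot]
    congr 1
    rw [dot_mulVec_self, dot_mulVec_self, Matrix.transpose_transpose, ← hJtJ]
  -- compute the whitened images
  have hJtJJp : Jᵀ * J * Jp = Jᵀ := by
    have h := congrArg Matrix.transpose hJp1
    rw [Matrix.transpose_mul, hJp3] at h
    rw [← Matrix.mul_assoc] at h
    exact h
  have hKy : (W * Wᵀ) *ᵥ (Jp *ᵥ z) = -vecM G := by
    rw [← hJtJ, Matrix.mulVec_mulVec, hJtJJp, hJtz]
  have hWtvG : Wᵀ *ᵥ vecM G = vecM (diagonal dT * (F * diagonal dS)) := by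
    rw [hWt, kron_mulVec Wlᵀ Wrᵀ G, Matrix.transpose_transpose]
    congr 1
    rw [hWr, hWl, hGform, Matrix.transpose_mul, hDTht]
    simp only [Matrix.mul_assoc]
    rw [cUT, cUS, ← Matrix.mul_assoc DTh DTh, hDT2, hDS2]
  have hdiagv : (diagonal dS ⊗ₖ diagonal dT) *ᵥ (Wᵀ *ᵥ (Jp *ᵥ z) + vecM F) = 0 := by
    rw [Matrix.mulVec_add]
    have h1 : (diagonal dS ⊗ₖ diagonal dT) *ᵥ (Wᵀ *ᵥ (Jp *ᵥ z))
        = -vecM (diagonal dT * (F * diagonal dS)) := by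
      rw [← hWtW, Matrix.mulVec_mulVec, Matrix.mul_assoc, ← Matrix.mulVec_mulVec, hKy,
        Matrix.mulVec_neg, hWtvG]
    have h2 : (diagonal dS ⊗ₖ diagonal dT) *ᵥ vecM F
        = vecM (diagonal dT * (F * diagonal dS)) := by
      rw [kron_mulVec, diagonal_transpose, Matrix.mul_assoc]
    rw [h1, h2, neg_add_cancel]
  have hWty : Wᵀ *ᵥ (Jp *ᵥ z) = -vecM F := by
    funext p
    have hp := congrFun hdiagv p
    rw [Matrix.diagonal_kronecker_diagonal, Matrix.mulVec_diagonal] at hp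
    have hne : dS p.1 * dT p.2 ≠ 0 := ne_of_gt (mul_pos (hdS _) (hdT _))
    have hz0 := (mul_eq_zero.mp hp).resolve_left hne
    have hz1 : (Wᵀ *ᵥ (Jp *ᵥ z)) p + vecM F p = 0 := hz0
    simp only [Pi.neg_apply]
    linarith
  have hWtx : Wᵀ *ᵥ vecM X = -vecM (UF' * (Sigr * VF'ᵀ)) := by
    have hXn : vecM X = -vecM (L * (Sigr * Rᵀ)) := by rw [hXdef, ← vecM_neg]
    rw [hXn, Matrix.mulVec_neg]
    apply congrArg Neg.neg
    rw [hWt, kron_mulVec Wlᵀ Wrᵀ, Matrix.transpose_transpose]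
    congr 1
    rw [hWr, hWl, hL, hR, Matrix.transpose_mul, Matrix.transpose_mul, Matrix.transpose_mul,
      Matrix.transpose_submatrix, hDSit, hDTht]
    simp only [Matrix.mul_assoc]
    rw [cUT, cDThi, cUS, hDSih, Matrix.mul_one]
  have hstep3 : Wᵀ *ᵥ (Jp *ᵥ z - vecM X) = vecM (UF' * (Sigr * VF'ᵀ) - F) := by
    rw [Matrix.mulVec_sub, hWty, hWtx, neg_sub_neg, vecM_sub]
  -- the tail bound
  set Stail : Matrix (Fin rt) (Fin rs) ℝ := Matrix.of fun (i : Fin rt) (j : Fin rs) =>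
    if (i : ℕ) = (j : ℕ) ∧ r ≤ (i : ℕ) then s i else 0 with hStail
  set Shead : Matrix (Fin rt) (Fin rs) ℝ := Matrix.of fun (i : Fin rt) (j : Fin rs) =>
    if (i : ℕ) = (j : ℕ) ∧ (i : ℕ) < r then s i else 0 with hShead
  have hsplit : Sfull = Shead + Stail := by
    ext i j
    rw [hSfull, hShead, hStail]
    simp only [Matrix.of_apply, Matrix.add_apply]
    by_cases h1 : (i : ℕ) = (j : ℕ)
    · by_cases h2 : (i : ℕ) < r
      · rw [if_pos h1, if_pos ⟨h1, h2⟩, if_neg (fun hc => absurd hc.2 (not_le.mpr h2)),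
          add_zero]
      · rw [if_pos h1, if_neg (fun hc => h2 hc.2), if_pos ⟨h1, le_of_not_gt h2⟩, zero_add]
    · rw [if_neg h1, if_neg (fun hc => h1 hc.1), if_neg (fun hc => h1 hc.1), add_zero]
  have hFr : UF' * (Sigr * VF'ᵀ) = UF * Shead * VFᵀ := by
    rw [← Matrix.mul_assoc, hUF', hVF', hSigrdef, hShead]
    exact trunc_svd_eq hrt hrs UF VF s
  have hdiff : UF' * (Sigr * VF'ᵀ) - F = -(UF * Stail * VFᵀ) := by
    rw [hFr, hFsvd, hsplit, Matrix.mul_add, Matrix.add_mul]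
    abel
  have hsum : ∑ p : Fin rs × Fin rt, (vecM (UF' * (Sigr * VF'ᵀ) - F) p) ^ 2
      = ∑ k ∈ Finset.Ico r (min rt rs), s k ^ 2 := by
    rw [hdiff]
    calc ∑ p : Fin rs × Fin rt, (vecM (-(UF * Stail * VFᵀ)) p) ^ 2
        = ∑ j : Fin rs, ∑ i : Fin rt, ((-(UF * Stail * VFᵀ)) i j) ^ 2 := by
          rw [Fintype.sum_prod_type]; rfl
      _ = ∑ i : Fin rt, ∑ j : Fin rs, ((UF * Stail * VFᵀ) i j) ^ 2 := by
          rw [Finset.sum_comm]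
          exact Finset.sum_congr rfl fun i _ => Finset.sum_congr rfl fun j _ => by
            rw [Matrix.neg_apply]; ring
      _ = ∑ i : Fin rt, ∑ j : Fin rs, (Stail i j) ^ 2 := frob_conj UF VF Stail hUF hVF
      _ = ∑ k ∈ Finset.Ico r (min rt rs), s k ^ 2 := by
          rw [hStail]
          exact tail_sum s
  -- assemble
  calc euclidNorm ((J * Jp - J * H * JHp) *ᵥ z)
      ≤ euclidNorm (((J * Jp - J * H * JHp) *ᵥ z) + (J * H) *ᵥ (JHp *ᵥ z - u)) := hstep1
    _ = euclidNorm (J *ᵥ (Jp *ᵥ z - vecM X)) := by rw [hsumeq]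
    _ = euclidNorm (Wᵀ *ᵥ (Jp *ᵥ z - vecM X)) := hstep2
    _ = euclidNorm (vecM (UF' * (Sigr * VF'ᵀ) - F)) := by rw [hstep3]
    _ = Real.sqrt (∑ i ∈ Finset.Ico r (min rt rs), s i ^ 2) := by
        rw [euclidNorm, hsum]
end

section
/- Let J ∈ ℝ^{n×(d_in·d_out)} admit the thin SVD J = U (D_S^{1/2} ⊗ D_T^{1/2}) (U_S ⊗ U_T)ᵀ, where U ∈ ℝ^{n×(r_s r_t)} has orthonormal columns, U_S ∈ ℝ^{d_in×r_s} and U_T ∈ ℝ^{d_out×r_t} have orthonormal columns, and D_S, D_T are diagonal positive definite. Let C ∈ ℝ^{n×n} be such that Jᵀ C J = (U_S D_S U_Sᵀ) ⊗ O for some symmetric O ∈ ℝ^{d_out×d_out}. Then Uᵀ C U = I_{r_s} ⊗ Φ, where Φ = D_T^{−1/2} U_Tᵀ O U_T D_T^{−1/2}; consequently, if Φ is positive definite, (Uᵀ C U)^{1/2} = I_{r_s} ⊗ Φ^{1/2}. -/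
open Matrix
open scoped Kronecker

section OldSqrt
open scoped ComplexOrder

/-- The positive semidefinite square root of a positive semidefinite matrix (the definition
`Matrix.PosSemidef.sqrt` of the older Mathlib, no longer present). -/
noncomputable def Matrix.PosSemidef.sqrt {n 𝕜 : Type*} [Fintype n] [RCLike 𝕜] [DecidableEq n]
    {A : Matrix n n 𝕜} (hA : A.PosSemidef) : Matrix n n 𝕜 :=
  hA.1.eigenvectorUnitary.1 * diagonal ((↑) ∘ (√·) ∘ hA.1.eigenvalues) *
  (star hA.1.eigenvectorUnitary : Matrix n n 𝕜)

end OldSqrt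

section OldSqrtLemmas
open scoped ComplexOrder MatrixOrder

lemma Matrix.PosSemidef.sqrt_eq_cfcSqrt {n 𝕜 : Type*} [Fintype n] [RCLike 𝕜] [DecidableEq n]
    {A : Matrix n n 𝕜} (hA : A.PosSemidef) : hA.sqrt = CFC.sqrt A := by
  rw [CFC.sqrt_eq_real_sqrt A hA.nonneg, cfcₙ_eq_cfc, hA.1.cfc_eq]
  rfl

lemma Matrix.PosSemidef.posSemidef_sqrt {n 𝕜 : Type*} [Fintype n] [RCLike 𝕜] [DecidableEq n]
    {A : Matrix n n 𝕜} (hA : A.PosSemidef) : hA.sqrt.PosSemidef := by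
  rw [hA.sqrt_eq_cfcSqrt]
  exact (CFC.sqrt_nonneg A).posSemidef

lemma Matrix.PosSemidef.sqrt_mul_self {n 𝕜 : Type*} [Fintype n] [RCLike 𝕜] [DecidableEq n]
    {A : Matrix n n 𝕜} (hA : A.PosSemidef) : hA.sqrt * hA.sqrt = A := by
  rw [hA.sqrt_eq_cfcSqrt]
  exact CFC.sqrt_mul_sqrt_self A hA.nonneg

lemma Matrix.PosSemidef.eq_sqrt_of_sq_eq {n 𝕜 : Type*} [Fintype n] [RCLike 𝕜] [DecidableEq n]
    {A B : Matrix n n 𝕜} (hA : A.PosSemidef) (hB : B.PosSemidef) (hsq : A ^ 2 = B) :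
    A = hB.sqrt := by
  rw [hB.sqrt_eq_cfcSqrt]
  exact (CFC.sqrt_unique (by rw [← pow_two]; exact hsq) hA.nonneg).symm

end OldSqrtLemmas

lemma one_kronecker_posSemidef {m k : ℕ} {B : Matrix (Fin k) (Fin k) ℝ}
    (hB : B.PosSemidef) :
    ((1 : Matrix (Fin m) (Fin m) ℝ) ⊗ₖ B).PosSemidef := by
  have hS := hB.posSemidef_sqrt
  have hSt : hB.sqrtᵀ = hB.sqrt := by
    have := hS.1
    rwa [Matrix.IsHermitian, conjTranspose_eq_transpose_of_trivial] at this
  have key : (1 : Matrix (Fin m) (Fin m) ℝ) ⊗ₖ B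
      = ((1 : Matrix (Fin m) (Fin m) ℝ) ⊗ₖ hB.sqrt)ᴴ
        * ((1 : Matrix (Fin m) (Fin m) ℝ) ⊗ₖ hB.sqrt) := by
    rw [conjTranspose_eq_transpose_of_trivial, ← kroneckerMap_transpose,
      Matrix.transpose_one, hSt, ← Matrix.mul_kronecker_mul, one_mul,
      hB.sqrt_mul_self]
  rw [key]
  exact posSemidef_conjTranspose_mul_self _

/-- Under the K-FAC factorization of the curvature-weighted Gram matrix
`Jᵀ C J = (U_S D_S U_Sᵀ) ⊗ O` and a thin SVD
`J = U (D_S^{1/2} ⊗ D_T^{1/2})(U_S ⊗ U_T)ᵀ`, the compressed curvature factorizes as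
`Uᵀ C U = I ⊗ Φ` with `Φ = D_T^{-1/2} U_Tᵀ O U_T D_T^{-1/2}`; consequently, if `Φ` is
positive definite then `(Uᵀ C U)^{1/2} = I ⊗ Φ^{1/2}`. -/
theorem compressed_curvature_kronecker {n din dout rs rt : ℕ}
    (J : Matrix (Fin n) (Fin din × Fin dout) ℝ)
    (U : Matrix (Fin n) (Fin rs × Fin rt) ℝ)
    (US : Matrix (Fin din) (Fin rs) ℝ) (UT : Matrix (Fin dout) (Fin rt) ℝ)
    (dS : Fin rs → ℝ) (dT : Fin rt → ℝ)
    (hU : Uᵀ * U = 1) (hUS : USᵀ * US = 1) (hUT : UTᵀ * UT = 1)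
    (hdS : ∀ i, 0 < dS i) (hdT : ∀ i, 0 < dT i)
    (hJ : J = U * (diagonal (fun i => Real.sqrt (dS i)) ⊗ₖ diagonal (fun i => Real.sqrt (dT i)))
            * (US ⊗ₖ UT)ᵀ)
    (C : Matrix (Fin n) (Fin n) ℝ)
    (O : Matrix (Fin dout) (Fin dout) ℝ) (hO : Oᵀ = O)
    (hJCJ : Jᵀ * C * J = (US * diagonal dS * USᵀ) ⊗ₖ O)
    (Φ : Matrix (Fin rt) (Fin rt) ℝ)
    (hΦ : Φ = diagonal (fun i => (Real.sqrt (dT i))⁻¹) * UTᵀ * O * UT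
              * diagonal (fun i => (Real.sqrt (dT i))⁻¹)) :
    Uᵀ * C * U = (1 : Matrix (Fin rs) (Fin rs) ℝ) ⊗ₖ Φ ∧
    ∀ (hΦpd : Φ.PosDef) (hUCU : (Uᵀ * C * U).PosSemidef),
      hUCU.sqrt = (1 : Matrix (Fin rs) (Fin rs) ℝ) ⊗ₖ hΦpd.posSemidef.sqrt := by
  set DS : Matrix (Fin rs) (Fin rs) ℝ := diagonal (fun i => Real.sqrt (dS i)) with hDS
  set DT : Matrix (Fin rt) (Fin rt) ℝ := diagonal (fun i => Real.sqrt (dT i)) with hDT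
  set DS' : Matrix (Fin rs) (Fin rs) ℝ := diagonal (fun i => (Real.sqrt (dS i))⁻¹) with hDS'
  set DT' : Matrix (Fin rt) (Fin rt) ℝ := diagonal (fun i => (Real.sqrt (dT i))⁻¹) with hDT'
  have hsS : ∀ i, Real.sqrt (dS i) ≠ 0 := fun i => (Real.sqrt_pos.2 (hdS i)).ne'
  have hsT : ∀ i, Real.sqrt (dT i) ≠ 0 := fun i => (Real.sqrt_pos.2 (hdT i)).ne'
  have hDS'DS : DS' * DS = 1 := by
    rw [hDS', hDS, diagonal_mul_diagonal,
      show (fun i => (Real.sqrt (dS i))⁻¹ * Real.sqrt (dS i)) = fun _ : Fin rs => (1 : ℝ) from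
        funext fun i => inv_mul_cancel₀ (hsS i), diagonal_one]
  have hDT'DT : DT' * DT = 1 := by
    rw [hDT', hDT, diagonal_mul_diagonal,
      show (fun i => (Real.sqrt (dT i))⁻¹ * Real.sqrt (dT i)) = fun _ : Fin rt => (1 : ℝ) from
        funext fun i => inv_mul_cancel₀ (hsT i), diagonal_one]
  have hDSDS' : DS * DS' = 1 := by
    rw [hDS', hDS, diagonal_mul_diagonal,
      show (fun i => Real.sqrt (dS i) * (Real.sqrt (dS i))⁻¹) = fun _ : Fin rs => (1 : ℝ) from
        funext fun i => mul_inv_cancel₀ (hsS i), diagonal_one]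
  have hDTDT' : DT * DT' = 1 := by
    rw [hDT', hDT, diagonal_mul_diagonal,
      show (fun i => Real.sqrt (dT i) * (Real.sqrt (dT i))⁻¹) = fun _ : Fin rt => (1 : ℝ) from
        funext fun i => mul_inv_cancel₀ (hsT i), diagonal_one]
  have hJT : Jᵀ = (US ⊗ₖ UT) * (DS ⊗ₖ DT) * Uᵀ := by
    rw [hJ, Matrix.transpose_mul, Matrix.transpose_mul, Matrix.transpose_transpose,
      ← kroneckerMap_transpose, hDS, hDT, Matrix.diagonal_transpose, Matrix.diagonal_transpose,
      Matrix.mul_assoc]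
  have hW : (US ⊗ₖ UT)ᵀ * (US ⊗ₖ UT) = 1 := by
    rw [← kroneckerMap_transpose, ← Matrix.mul_kronecker_mul, hUS, hUT, one_kronecker_one]
  have hKey : (DS ⊗ₖ DT) * (Uᵀ * C * U) * (DS ⊗ₖ DT)
      = diagonal dS ⊗ₖ (UTᵀ * O * UT) := by
    have h1 : (US ⊗ₖ UT)ᵀ * (Jᵀ * C * J) * (US ⊗ₖ UT)
        = (DS ⊗ₖ DT) * (Uᵀ * C * U) * (DS ⊗ₖ DT) := by
      rw [hJT, hJ]
      simp only [Matrix.mul_assoc]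
      rw [hW, Matrix.mul_one, ← Matrix.mul_assoc ((US ⊗ₖ UT)ᵀ) (US ⊗ₖ UT), hW]
      simp only [Matrix.one_mul, Matrix.mul_assoc]
    have h2 : (US ⊗ₖ UT)ᵀ * ((US * diagonal dS * USᵀ) ⊗ₖ O) * (US ⊗ₖ UT)
        = diagonal dS ⊗ₖ (UTᵀ * O * UT) := by
      rw [← kroneckerMap_transpose, ← Matrix.mul_kronecker_mul, ← Matrix.mul_kronecker_mul,
        show USᵀ * (US * diagonal dS * USᵀ) * US = diagonal dS by
          rw [← Matrix.mul_assoc, ← Matrix.mul_assoc, hUS, one_mul, Matrix.mul_assoc, hUS,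
            Matrix.mul_one]]
    rw [← h1, hJCJ, h2]
  have e1 : (DS' ⊗ₖ DT') * (DS ⊗ₖ DT) = 1 := by
    rw [← Matrix.mul_kronecker_mul, hDS'DS, hDT'DT, one_kronecker_one]
  have e2 : (DS ⊗ₖ DT) * (DS' ⊗ₖ DT') = 1 := by
    rw [← Matrix.mul_kronecker_mul, hDSDS', hDTDT', one_kronecker_one]
  have hMain : Uᵀ * C * U = (1 : Matrix (Fin rs) (Fin rs) ℝ) ⊗ₖ Φ := by
    calc Uᵀ * C * U
        = (DS' ⊗ₖ DT') * ((DS ⊗ₖ DT) * (Uᵀ * C * U) * (DS ⊗ₖ DT)) * (DS' ⊗ₖ DT') := by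
          rw [show (DS' ⊗ₖ DT') * ((DS ⊗ₖ DT) * (Uᵀ * C * U) * (DS ⊗ₖ DT)) * (DS' ⊗ₖ DT')
              = ((DS' ⊗ₖ DT') * (DS ⊗ₖ DT)) * (Uᵀ * C * U) * ((DS ⊗ₖ DT) * (DS' ⊗ₖ DT')) by
            simp only [Matrix.mul_assoc], e1, e2, Matrix.one_mul, Matrix.mul_one]
      _ = (DS' ⊗ₖ DT') * (diagonal dS ⊗ₖ (UTᵀ * O * UT)) * (DS' ⊗ₖ DT') := by rw [hKey]
      _ = (DS' * diagonal dS * DS') ⊗ₖ (DT' * (UTᵀ * O * UT) * DT') := by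
          rw [← Matrix.mul_kronecker_mul, ← Matrix.mul_kronecker_mul]
      _ = (1 : Matrix (Fin rs) (Fin rs) ℝ) ⊗ₖ Φ := by
          have hd1 : DS' * diagonal dS * DS' = 1 := by
            rw [hDS', diagonal_mul_diagonal, diagonal_mul_diagonal,
              show (fun i => (Real.sqrt (dS i))⁻¹ * dS i * (Real.sqrt (dS i))⁻¹)
                  = fun _ : Fin rs => (1 : ℝ) from funext fun i => by
                rw [← Real.mul_self_sqrt (hdS i).le]
                field_simp
                rw [Real.sqrt_sq (Real.sqrt_nonneg _)]
                exact div_self (pow_ne_zero 2 (hsS i)), diagonal_one]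
          have hd2 : DT' * (UTᵀ * O * UT) * DT' = Φ := by
            rw [hΦ]; simp [Matrix.mul_assoc]
          rw [hd1, hd2]
  refine ⟨hMain, fun hΦpd hUCU => ?_⟩
  have hPsd : ((1 : Matrix (Fin rs) (Fin rs) ℝ) ⊗ₖ hΦpd.posSemidef.sqrt).PosSemidef :=
    one_kronecker_posSemidef hΦpd.posSemidef.posSemidef_sqrt
  have hsq : ((1 : Matrix (Fin rs) (Fin rs) ℝ) ⊗ₖ hΦpd.posSemidef.sqrt) ^ 2 = Uᵀ * C * U := by
    rw [pow_two, ← Matrix.mul_kronecker_mul, one_mul, hΦpd.posSemidef.sqrt_mul_self, hMain]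
  exact (hPsd.eq_sqrt_of_sq_eq hUCU hsq).symm
end
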